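/- arXiv:2408.01759 — 4 statements merged into one kernel-verified Lean document; each statement's English description precedes it below -/
import Mathlib

section
/- Let x, y be real numbers with x > y > 0. Then 2πy + Σ_{n=1}^∞ (r_4(n)/n) · (e^{−πn(x−y)} − e^{−πn(x+y)}) = 2πy/(x² − y²) + Σ_{n=1}^∞ (r_4(n)/n) · (e^{−πn/(x+y)} − e^{−πn/(x−y)}). -/
open scoped Real BigOperators

/-- Number of representations of `n` as a sum of `k` squares of integers. -/
noncomputable def rk (k n : ℕ) : ℕ :=
  Nat.card {v : Fin k → ℤ // ∑ i, (v i)^2 = (n : ℤ)}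

/-- Bessel function of the first kind of real order `ν`. -/
noncomputable def besselJ (ν t : ℝ) : ℝ :=
  ∑' m : ℕ, (-1 : ℝ)^m * (t/2) ^ (2*(m:ℝ)+ν) / ((m.factorial : ℝ) * Real.Gamma ((m:ℝ)+ν+1))

/-- Modified Bessel function of the first kind of real order `ν`. -/
noncomputable def besselI (ν t : ℝ) : ℝ :=
  ∑' m : ℕ, (t/2) ^ (2*(m:ℝ)+ν) / ((m.factorial : ℝ) * Real.Gamma ((m:ℝ)+ν+1))

/-- Modified Bessel function of the second kind of complex order `ν`. -/
noncomputable def besselK (ν : ℂ) (t : ℝ) : ℂ :=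
  ∫ u in Set.Ioi (0:ℝ), (Real.exp (-t * Real.cosh u) : ℂ) * Complex.cosh (ν * u)

/-- Gauss hypergeometric series. -/
noncomputable def hyp2F1 (a b c z : ℂ) : ℂ :=
  ∑' ℓ : ℕ, ((ascPochhammer ℂ ℓ).eval a * (ascPochhammer ℂ ℓ).eval b) /
    ((ascPochhammer ℂ ℓ).eval c * (ℓ.factorial : ℂ)) * z ^ ℓ

/-- Sum-of-divisors function with natural exponent. -/
noncomputable def sigmaNat (k n : ℕ) : ℕ := ∑ d ∈ n.divisors, d^k

/-- Divisor function with complex exponent. -/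
noncomputable def sigmaC (z : ℂ) (n : ℕ) : ℂ := ∑ d ∈ n.divisors, (d:ℂ) ^ z

/-- Dirichlet series attached to sums of `k` squares. -/
noncomputable def zetaK (k : ℕ) (s : ℂ) : ℂ := ∑' n : ℕ, (rk k (n+1) : ℂ) * ((n:ℂ)+1) ^ (-s)

/-- Completed Dirichlet series attached to sums of `k` squares. -/
noncomputable def etaK (k : ℕ) (s : ℂ) : ℂ := (π:ℂ) ^ (-s) * Complex.Gamma s * zetaK k s

/-- Gauss sum of a Dirichlet character. -/
noncomputable def gaussSumChar {q : ℕ} (χ : DirichletCharacter ℂ q) : ℂ :=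
  ∑ ℓ ∈ Finset.Ico 1 q, χ ((ℓ : ℕ) : ZMod q) * Complex.exp (2*(π:ℂ)*Complex.I*(ℓ:ℂ)/(q:ℂ))

open Real MeasureTheory
open scoped ENNReal NNReal

noncomputable def th (t : ℝ) : ℝ := ∑' n : ℤ, rexp (-π * t * (n:ℝ)^2)

lemma aux_nat {t : ℝ} (ht : 0 < t) :
    Summable fun n : ℕ => rexp (-π * t * ((n:ℝ))^2) := by
  have hr1 : rexp (-(π * t)) < 1 := by
    rw [exp_lt_one_iff, neg_lt_zero]; positivity
  refine Summable.of_nonneg_of_le (fun n => (exp_pos _).le)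
    (fun n => ?_) (summable_geometric_of_lt_one (exp_pos _).le hr1)
  rw [← Real.exp_nat_mul]
  apply exp_le_exp.2
  have h1 : (n:ℝ) ≤ (n:ℝ)^2 := by
    have := Nat.le_self_pow (two_ne_zero) n
    exact_mod_cast this
  have h2 : 0 ≤ π * t := by positivity
  nlinarith [mul_le_mul_of_nonneg_left h1 h2]

lemma summable1 {t : ℝ} (ht : 0 < t) :
    Summable fun n : ℤ => rexp (-π * t * (n:ℝ)^2) := by
  refine Summable.of_nat_of_neg_add_one ?_ ?_
  · exact aux_nat ht
  · have := (aux_nat ht).comp_injective (add_left_injective 1)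
    refine this.congr fun n => ?_
    simp only [Function.comp_apply]
    congr 1
    push_cast
    ring

noncomputable def e4 : ((ℤ × ℤ) × (ℤ × ℤ)) ≃ (Fin 4 → ℤ) where
  toFun q := ![q.1.1, q.1.2, q.2.1, q.2.2]
  invFun v := ((v 0, v 1), (v 2, v 3))
  left_inv q := rfl
  right_inv v := by funext i; fin_cases i <;> rfl

lemma prod_eq (t : ℝ) (q : (ℤ × ℤ) × (ℤ × ℤ)) :
    rexp (-π*t*(q.1.1:ℝ)^2) * rexp (-π*t*(q.1.2:ℝ)^2) *
      (rexp (-π*t*(q.2.1:ℝ)^2) * rexp (-π*t*(q.2.2:ℝ)^2))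
    = rexp (-π * t * ∑ i, ((e4 q i):ℝ)^2) := by
  rw [show e4 q = ![q.1.1, q.1.2, q.2.1, q.2.2] from rfl]
  simp only [e4, Equiv.coe_fn_mk, Fin.sum_univ_four, ← Real.exp_add,
    Matrix.cons_val_zero, Matrix.cons_val_one, Matrix.head_cons,
    Matrix.cons_val_two, Matrix.tail_cons, Matrix.cons_val_three]
  ring_nf

lemma hn1 {t : ℝ} (ht : 0 < t) :
    Summable fun n : ℤ => ‖rexp (-π * t * (n:ℝ)^2)‖ := by
  simpa [Real.norm_eq_abs, abs_of_pos (exp_pos _)] using summable1 ht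

lemma h2sum {t : ℝ} (ht : 0 < t) :
    Summable fun p : ℤ × ℤ => rexp (-π*t*(p.1:ℝ)^2) * rexp (-π*t*(p.2:ℝ)^2) :=
  summable_mul_of_summable_norm (f := fun n : ℤ => rexp (-π*t*(n:ℝ)^2))
    (g := fun n : ℤ => rexp (-π*t*(n:ℝ)^2)) (hn1 ht) (hn1 ht)

lemma hn2 {t : ℝ} (ht : 0 < t) :
    Summable fun p : ℤ × ℤ => ‖rexp (-π*t*(p.1:ℝ)^2) * rexp (-π*t*(p.2:ℝ)^2)‖ := by
  refine (h2sum ht).congr fun p => ?_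
  rw [Real.norm_eq_abs, abs_of_pos (by positivity)]

lemma h4sum {t : ℝ} (ht : 0 < t) :
    Summable fun q : (ℤ × ℤ) × (ℤ × ℤ) =>
      rexp (-π*t*(q.1.1:ℝ)^2) * rexp (-π*t*(q.1.2:ℝ)^2) *
        (rexp (-π*t*(q.2.1:ℝ)^2) * rexp (-π*t*(q.2.2:ℝ)^2)) :=
  summable_mul_of_summable_norm (f := fun p : ℤ × ℤ => rexp (-π*t*(p.1:ℝ)^2) * rexp (-π*t*(p.2:ℝ)^2))
    (g := fun p : ℤ × ℤ => rexp (-π*t*(p.1:ℝ)^2) * rexp (-π*t*(p.2:ℝ)^2)) (hn2 ht) (hn2 ht)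

lemma summable4' {t : ℝ} (ht : 0 < t) :
    Summable fun v : Fin 4 → ℤ => rexp (-π * t * ∑ i, ((v i):ℝ)^2) := by
  refine (Equiv.summable_iff e4).1 ?_
  exact (h4sum ht).congr fun q => prod_eq t q

lemma theta_pow' {t : ℝ} (ht : 0 < t) :
    th t ^ 4 = ∑' v : Fin 4 → ℤ, rexp (-π * t * ∑ i, ((v i):ℝ)^2) := by
  have step1 : th t * th t = ∑' p : ℤ × ℤ, rexp (-π*t*(p.1:ℝ)^2) * rexp (-π*t*(p.2:ℝ)^2) :=
    tsum_mul_tsum_of_summable_norm (f := fun n : ℤ => rexp (-π*t*(n:ℝ)^2))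
      (g := fun n : ℤ => rexp (-π*t*(n:ℝ)^2)) (hn1 ht) (hn1 ht)
  have step2 : th t ^ 4 = ∑' q : (ℤ × ℤ) × (ℤ × ℤ),
      rexp (-π*t*(q.1.1:ℝ)^2) * rexp (-π*t*(q.1.2:ℝ)^2) *
        (rexp (-π*t*(q.2.1:ℝ)^2) * rexp (-π*t*(q.2.2:ℝ)^2)) := by
    have : th t ^ 4 = (th t * th t) * (th t * th t) := by ring
    rw [this, step1, tsum_mul_tsum_of_summable_norm (f := fun p : ℤ × ℤ => rexp (-π*t*(p.1:ℝ)^2) * rexp (-π*t*(p.2:ℝ)^2))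
      (g := fun p : ℤ × ℤ => rexp (-π*t*(p.1:ℝ)^2) * rexp (-π*t*(p.2:ℝ)^2)) (hn2 ht) (hn2 ht)]
  rw [step2, ← Equiv.tsum_eq e4 (fun v => rexp (-π * t * ∑ i, ((v i):ℝ)^2))]
  exact tsum_congr fun q => prod_eq t q

/-- the labelling map -/
def lab (v : Fin 4 → ℤ) : ℕ := (∑ i, (v i)^2).toNat

lemma lab_sum_nonneg (v : Fin 4 → ℤ) : 0 ≤ ∑ i, (v i)^2 :=
  Finset.sum_nonneg fun i _ => sq_nonneg _

lemma lab_eq_iff (v : Fin 4 → ℤ) (n : ℕ) : lab v = n ↔ ∑ i, (v i)^2 = (n : ℤ) := by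
  have := lab_sum_nonneg v
  unfold lab
  omega

lemma card_fiber (n : ℕ) : Nat.card (lab ⁻¹' {n} : Set (Fin 4 → ℤ)) = rk 4 n := by
  apply Nat.card_congr
  exact Equiv.subtypeEquivRight fun v => by
    simpa [Set.mem_preimage] using lab_eq_iff v n

instance fiber_finite (n : ℕ) : Finite (lab ⁻¹' {n} : Set (Fin 4 → ℤ)) := by
  have : (lab ⁻¹' {n} : Set (Fin 4 → ℤ)) ⊆ Set.pi Set.univ
      (fun _ : Fin 4 => Set.Icc (-(n:ℤ)) n) := by
    intro v hv
    simp only [Set.mem_preimage, Set.mem_singleton_iff] at hv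
    rw [lab_eq_iff] at hv
    intro i _
    have h1 : (v i)^2 ≤ (n:ℤ) := by
      rw [← hv]
      exact Finset.single_le_sum (fun j _ => sq_nonneg (v j)) (Finset.mem_univ i)
    constructor <;> nlinarith [sq_nonneg (v i + n), sq_nonneg (v i - n), Int.natCast_nonneg n]
  have hfin : (Set.pi Set.univ (fun _ : Fin 4 => Set.Icc (-(n:ℤ)) n)).Finite :=
    Set.Finite.pi fun _ => Set.finite_Icc _ _
  exact (hfin.subset this).to_subtype

lemma hasSum_rk {t : ℝ} (ht : 0 < t) :
    HasSum (fun n : ℕ => (rk 4 n : ℝ) * rexp (-π * t * n)) (th t ^ 4) := by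
  have h := (summable4' ht).hasSum
  rw [← theta_pow' ht] at h
  have h2 := h.tsum_fiberwise lab
  refine h2.congr_fun fun n => ?_
  have hconst : ∀ v : (lab ⁻¹' {n} : Set (Fin 4 → ℤ)),
      rexp (-π * t * ∑ i, (((v : Fin 4 → ℤ) i):ℝ)^2) = rexp (-π * t * n) := by
    rintro ⟨v, hv⟩
    simp only [Set.mem_preimage, Set.mem_singleton_iff] at hv
    rw [lab_eq_iff] at hv
    congr 1
    have : (∑ i, (((v i):ℝ))^2) = ((∑ i, (v i)^2 : ℤ) : ℝ) := by push_cast; ring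
    rw [this, hv]
    norm_cast
  rw [tsum_congr hconst, tsum_const, card_fiber, nsmul_eq_mul]

lemma rk_zero : rk 4 0 = 1 := by
  unfold rk
  rw [Nat.card_eq_one_iff_unique]
  constructor
  · constructor
    rintro ⟨v, hv⟩ ⟨w, hw⟩
    have hz : ∀ (u : Fin 4 → ℤ), (∑ i, (u i)^2 = (0:ℤ)) → u = 0 := by
      intro u hu
      funext i
      have := (Finset.sum_eq_zero_iff_of_nonneg (fun j _ => sq_nonneg (u j))).1 hu i
        (Finset.mem_univ i)
      have := sq_eq_zero_iff.1 this
      simpa using this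
    simp only [Subtype.mk_eq_mk]
    rw [hz v hv, hz w hw]
  · exact ⟨⟨0, by simp⟩⟩

lemma hasSum_G {t : ℝ} (ht : 0 < t) :
    HasSum (fun n : ℕ => (rk 4 (n+1) : ℝ) * rexp (-π * t * ((n:ℝ)+1))) (th t ^ 4 - 1) := by
  have h := hasSum_rk ht
  have h1 := (hasSum_nat_add_iff' (f := fun n : ℕ => (rk 4 n : ℝ) * rexp (-π * t * n)) 1).2 h
  have he : (∑ i ∈ Finset.range 1, (rk 4 i : ℝ) * rexp (-π * t * i)) = 1 := by
    simp [rk_zero]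
  rw [he] at h1
  refine h1.congr_fun fun n => ?_
  push_cast
  norm_num

lemma theta_inv' {t : ℝ} (ht : 0 < t) : th t⁻¹ = t ^ ((1:ℝ)/2) * th t := by
  have h := Real.tsum_exp_neg_mul_int_sq ht
  have h2 : th t = (1:ℝ) / t ^ ((1:ℝ)/2) * th t⁻¹ := by
    rw [th, th, h]
    congr 1
  have hne : t ^ ((1:ℝ)/2) ≠ 0 := by positivity
  rw [h2]
  field_simp

lemma theta_inv {t : ℝ} (ht : 0 < t) : th t⁻¹ ^ 4 = t ^ 2 * th t ^ 4 := by
  rw [theta_inv' ht, mul_pow]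
  congr 1
  rw [← Real.rpow_natCast (t ^ ((1:ℝ)/2)) 4, ← Real.rpow_mul ht.le]
  norm_num

lemma contG {c : ℝ} (hc : 0 < c) :
    ContinuousOn (fun t => ∑' n : ℕ, (rk 4 (n+1):ℝ) * rexp (-π * t * ((n:ℝ)+1)))
      (Set.Ici c) := by
  refine continuousOn_tsum (fun n => Continuous.continuousOn (by fun_prop))
    ((hasSum_G hc).summable) fun n t htc => ?_
  rw [Real.norm_eq_abs, abs_of_nonneg (by positivity)]
  have h1 : rexp (-π * t * ((n:ℝ)+1)) ≤ rexp (-π * c * ((n:ℝ)+1)) := by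
    apply exp_le_exp.2
    have hle : c ≤ t := htc
    have := mul_le_mul_of_nonneg_right (mul_le_mul_of_nonneg_left hle Real.pi_pos.le)
      (show (0:ℝ) ≤ (n:ℝ)+1 by positivity)
    linarith
  exact mul_le_mul_of_nonneg_left h1 (by positivity)

lemma theta4_eq {t : ℝ} (ht : 0 < t) :
    th t ^ 4 = 1 + ∑' n : ℕ, (rk 4 (n+1):ℝ) * rexp (-π * t * ((n:ℝ)+1)) := by
  rw [(hasSum_G ht).tsum_eq]
  ring

lemma cont_theta4 {c : ℝ} (hc : 0 < c) :
    ContinuousOn (fun t => th t ^ 4) (Set.Ici c) := by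
  have h1 : ContinuousOn (fun t => 1 + ∑' n : ℕ, (rk 4 (n+1):ℝ) * rexp (-π * t * ((n:ℝ)+1)))
      (Set.Ici c) := continuousOn_const.add (contG hc)
  exact h1.congr fun t htc => theta4_eq (lt_of_lt_of_le hc htc)

lemma int_exp {m : ℝ} (a b : ℝ) (hm : 0 < m) :
    ∫ t in a..b, rexp (-(π*m) * t)
      = (rexp (-(π*m)*a) - rexp (-(π*m)*b)) / (π*m) := by
  have hπm : (π*m) ≠ 0 := by positivity
  have hd : ∀ x : ℝ, HasDerivAt (fun u => -rexp (-(π*m)*u) / (π*m)) (rexp (-(π*m)*x)) x := by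
    intro x
    have h1 : HasDerivAt (fun u : ℝ => -(π*m)*u) (-(π*m)) x := by
      simpa using (hasDerivAt_id x).const_mul (-(π*m))
    have h2 := h1.exp
    have h3 := (h2.neg).div_const (π*m)
    exact h3.congr_deriv (by rw [div_eq_iff hπm]; ring)
  rw [intervalIntegral.integral_eq_sub_of_hasDerivAt (fun x _ => hd x)
    (Continuous.intervalIntegrable (by fun_prop) a b)]
  ring

lemma int_exp' {m : ℝ} (a b : ℝ) (hm : 0 < m) :
    ∫ t in a..b, rexp (-π * m * t)
      = (rexp (-π*m*a) - rexp (-π*m*b)) / (π*m) := by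
  have h := int_exp a b hm
  simp only [neg_mul] at h ⊢
  exact h

lemma tsum_eq_integral {a b : ℝ} (ha : 0 < a) (hab : a ≤ b) :
    ∑' n : ℕ, (rk 4 (n+1):ℝ) / ((n:ℝ)+1) *
      (rexp (-π * ((n:ℝ)+1) * a) - rexp (-π * ((n:ℝ)+1) * b))
    = ∫ t in a..b, π * (th t ^ 4 - 1) := by
  have hmeas : MeasurableSet (Set.Ioc a b) := measurableSet_Ioc
  set F : ℕ → ℝ → ℝ := fun n t => π * ((rk 4 (n+1):ℝ) * rexp (-π * ((n:ℝ)+1) * t)) with hF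
  have hpt : ∀ t ∈ Set.Ioc a b, π * (th t ^ 4 - 1) = ∑' n, F n t := by
    intro t htm
    have ht : 0 < t := lt_trans ha htm.1
    have hs2 : HasSum (fun n => F n t) (π * (th t ^ 4 - 1)) := by
      refine ((hasSum_G ht).mul_left π).congr_fun fun n => ?_
      rw [show -π * t * ((n:ℝ)+1) = -π * ((n:ℝ)+1) * t from by ring]
    exact hs2.tsum_eq.symm
  rw [intervalIntegral.integral_of_le hab, MeasureTheory.setIntegral_congr_fun hmeas hpt,
    MeasureTheory.integral_tsum ?hm ?hb]
  case hm => exact fun n => Continuous.aestronglyMeasurable (by fun_prop)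
  case hb =>
    have hvol : volume (Set.Ioc a b) < ⊤ := measure_Ioc_lt_top
    set C : ℕ → ℝ := fun n => π * ((rk 4 (n+1):ℝ) * rexp (-π * ((n:ℝ)+1) * a)) with hC
    have hCsum : Summable C := by
      refine (((hasSum_G ha).summable).mul_left π).congr fun n => ?_
      rw [show -π * a * ((n:ℝ)+1) = -π * ((n:ℝ)+1) * a from by ring]
    have hCn : Summable fun n => ‖C n‖₊ := by
      rw [← NNReal.summable_coe]
      refine (hCsum.abs).congr fun n => ?_
      rw [coe_nnnorm, Real.norm_eq_abs]
    have htop : (∑' n, (‖C n‖₊ : ℝ≥0∞)) ≠ ⊤ := ENNReal.tsum_coe_ne_top_iff_summable.2 hCn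
    have hle : ∀ n, (∫⁻ t in Set.Ioc a b, ‖F n t‖₊) ≤ (‖C n‖₊ : ℝ≥0∞) * volume (Set.Ioc a b) := by
      intro n
      have hbd : ∀ t ∈ Set.Ioc a b, (‖F n t‖₊ : ℝ≥0∞) ≤ (‖C n‖₊ : ℝ≥0∞) := by
        intro t htm
        have hFC : F n t ≤ C n := by
          rw [hF, hC]
          simp only []
          have hexp : rexp (-π * ((n:ℝ)+1) * t) ≤ rexp (-π * ((n:ℝ)+1) * a) := by
            apply exp_le_exp.2
            have h1 : a ≤ t := htm.1.le
            have h2 := mul_le_mul_of_nonneg_left h1 (show (0:ℝ) ≤ π*((n:ℝ)+1) by positivity)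
            nlinarith
          exact mul_le_mul_of_nonneg_left
            (mul_le_mul_of_nonneg_left hexp (Nat.cast_nonneg _)) Real.pi_pos.le
        have hF0 : 0 ≤ F n t := by rw [hF]; positivity
        apply ENNReal.coe_le_coe.2
        rw [← NNReal.coe_le_coe, coe_nnnorm, coe_nnnorm, Real.norm_eq_abs, Real.norm_eq_abs,
          abs_of_nonneg hF0, abs_of_nonneg (le_trans hF0 hFC)]
        exact hFC
      calc (∫⁻ t in Set.Ioc a b, ‖F n t‖₊)
          ≤ ∫⁻ _ in Set.Ioc a b, (‖C n‖₊ : ℝ≥0∞) :=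
            MeasureTheory.setLIntegral_mono measurable_const hbd
        _ = (‖C n‖₊ : ℝ≥0∞) * volume (Set.Ioc a b) := by
            rw [MeasureTheory.setLIntegral_const]
    refine ne_of_lt (lt_of_le_of_lt (ENNReal.tsum_le_tsum hle) ?_)
    rw [ENNReal.tsum_mul_right]
    exact ENNReal.mul_lt_top htop.lt_top hvol
  refine tsum_congr fun n => ?_
  rw [← intervalIntegral.integral_of_le hab]
  have hm1 : (0:ℝ) < (n:ℝ)+1 := by positivity
  have hint : ∫ t in a..b, F n t
      = π * ((rk 4 (n+1):ℝ) * ((rexp (-π*((n:ℝ)+1)*a) - rexp (-π*((n:ℝ)+1)*b)) / (π*((n:ℝ)+1)))) := by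
    rw [hF]
    simp only []
    rw [intervalIntegral.integral_const_mul, intervalIntegral.integral_const_mul,
      int_exp' a b hm1]
  rw [hint]
  have hπ : π ≠ 0 := Real.pi_ne_zero
  field_simp

lemma subst_int {a b : ℝ} (ha : 0 < a) (hab : a ≤ b) :
    ∫ t in b⁻¹..a⁻¹, th t ^ 4 = ∫ t in a..b, th t ^ 4 := by
  have hb : 0 < b := lt_of_lt_of_le ha hab
  have huIcc : Set.uIcc a b = Set.Icc a b := Set.uIcc_of_le hab
  have hpos : ∀ x ∈ Set.uIcc a b, 0 < x := by
    intro x hx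
    rw [huIcc] at hx
    exact lt_of_lt_of_le ha hx.1
  have hne : ∀ x ∈ Set.uIcc a b, x ≠ 0 := fun x hx => (hpos x hx).ne'
  have hcf : ContinuousOn (fun x : ℝ => x⁻¹) (Set.uIcc a b) :=
    ContinuousOn.inv₀ continuousOn_id hne
  have hderiv : ∀ x ∈ Set.Ioo (min a b) (max a b),
      HasDerivWithinAt (fun x : ℝ => x⁻¹) (-(x^2)⁻¹) (Set.Ioi x) x := by
    intro x hx
    have hx0 : x ≠ 0 := by
      have : a < x := by
        rcases hx with ⟨h1, _⟩
        simpa [min_eq_left hab] using h1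
      exact (lt_trans ha this).ne'
    exact (hasDerivAt_inv hx0).hasDerivWithinAt
  have hcf' : ContinuousOn (fun x : ℝ => -(x^2)⁻¹) (Set.uIcc a b) := by
    apply ContinuousOn.neg
    exact ContinuousOn.inv₀ (by fun_prop) fun x hx => pow_ne_zero _ (hne x hx)
  have himg : (fun x : ℝ => x⁻¹) '' (Set.uIcc a b) ⊆ Set.Ici b⁻¹ := by
    rintro _ ⟨x, hx, rfl⟩
    have hx0 : 0 < x := hpos x hx
    have hxb : x ≤ b := by rw [huIcc] at hx; exact hx.2
    exact Set.mem_Ici.2 (by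
      apply inv_anti₀ hx0 hxb)
  have hg : ContinuousOn (fun t => th t ^ 4) ((fun x : ℝ => x⁻¹) '' (Set.uIcc a b)) :=
    (cont_theta4 (inv_pos.2 hb)).mono himg
  have h := intervalIntegral.integral_comp_smul_deriv'' hcf hderiv hcf' hg
  have heq : Set.EqOn (fun x => (-(x^2)⁻¹) • ((fun t => th t ^ 4) ∘ (fun x : ℝ => x⁻¹)) x)
      (fun x => -(th x ^ 4)) (Set.uIcc a b) := by
    intro x hx
    have hx0 : 0 < x := hpos x hx
    simp only [smul_eq_mul, Function.comp_apply]
    rw [theta_inv hx0]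
    field_simp
  rw [intervalIntegral.integral_congr heq, intervalIntegral.integral_neg] at h
  rw [intervalIntegral.integral_symm]
  linarith [h]


/-- the case `k = 4`. -/
theorem stmt2 (x y : ℝ) (hy : 0 < y) (hxy : y < x) :
    2*π*y + ∑' n : ℕ, (rk 4 (n+1) : ℝ) / ((n:ℝ)+1) *
      (Real.exp (-π*((n:ℝ)+1)*(x-y)) - Real.exp (-π*((n:ℝ)+1)*(x+y)))
    = 2*π*y/(x^2-y^2) + ∑' n : ℕ, (rk 4 (n+1) : ℝ) / ((n:ℝ)+1) *
      (Real.exp (-π*((n:ℝ)+1)/(x+y)) - Real.exp (-π*((n:ℝ)+1)/(x-y))) := by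
  
  have ha : 0 < x - y := by linarith
  have hb : 0 < x + y := by linarith
  have hab : x - y ≤ x + y := by linarith
  have ha' : 0 < (x+y)⁻¹ := inv_pos.2 hb
  have hab' : (x+y)⁻¹ ≤ (x-y)⁻¹ := by
    apply inv_anti₀ ha hab
  have hsplit : ∀ {c d : ℝ}, IntervalIntegrable (fun t => th t ^ 4) volume c d →
      ∫ t in c..d, π * (th t ^ 4 - 1)
        = π * (∫ t in c..d, th t ^ 4) - π * (d - c) := by
    intro c d hcd
    have he : ∫ t in c..d, π * (th t ^ 4 - 1) = ∫ t in c..d, (π * th t ^ 4 - π) :=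
      intervalIntegral.integral_congr fun t _ => by ring
    rw [he, intervalIntegral.integral_sub (hcd.const_mul π) intervalIntegrable_const,
      intervalIntegral.integral_const_mul, intervalIntegral.integral_const, smul_eq_mul]
    ring
  have hi1 : IntervalIntegrable (fun t => th t ^ 4) volume (x-y) (x+y) :=
    ContinuousOn.intervalIntegrable ((cont_theta4 ha).mono
      (by rw [Set.uIcc_of_le hab]; exact Set.Icc_subset_Ici_self))
  have hi2 : IntervalIntegrable (fun t => th t ^ 4) volume (x+y)⁻¹ (x-y)⁻¹ :=
    ContinuousOn.intervalIntegrable ((cont_theta4 ha').mono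
      (by rw [Set.uIcc_of_le hab']; exact Set.Icc_subset_Ici_self))
  have h1 := tsum_eq_integral ha hab
  have h2 := tsum_eq_integral ha' hab'
  have h3 := subst_int ha hab
  rw [hsplit hi1] at h1
  rw [hsplit hi2, h3] at h2
  have hgoal2 : ∑' n : ℕ, (rk 4 (n+1) : ℝ) / ((n:ℝ)+1) *
      (Real.exp (-π*((n:ℝ)+1)/(x+y)) - Real.exp (-π*((n:ℝ)+1)/(x-y)))
      = π * (∫ t in (x-y)..(x+y), th t ^ 4) - π * ((x-y)⁻¹ - (x+y)⁻¹) := by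
    rw [← h2]
    exact tsum_congr fun n => by rw [div_eq_mul_inv (-π*((n:ℝ)+1)), div_eq_mul_inv (-π*((n:ℝ)+1))]
  rw [h1, hgoal2]
  have hx1 : (x-y)⁻¹ - (x+y)⁻¹ = 2*y*((x^2-y^2)⁻¹) := by
    rw [inv_sub_inv ha.ne' hb.ne']
    congr 1
    · ring
    · congr 1; ring
  have hx2 : 2*π*y/(x^2-y^2) = π * (2*y*((x^2-y^2)⁻¹)) := by
    rw [div_eq_mul_inv]; ring
  rw [hx1, hx2]
  ring
end

section
/- Let x > 0 be a real number and z a real number. Then x^{1/4} · e^{z²/8} · (1 + 2 Σ_{n=1}^∞ e^{−πn²x} cos(√(πx) · n z)) = x^{−1/4} · e^{−z²/8} · (1 + 2 Σ_{n=1}^∞ e^{−πn²/x} cosh(√(π/x) · n z)). -/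
open scoped Real BigOperators

open Complex

lemma theta_split (w : ℂ) {s : ℝ} (hs : 0 < s) :
    jacobiTheta₂ w (I*s) = 1 + ∑' n : ℕ,
      (jacobiTheta₂_term ((n:ℤ)+1) w (I*s) + jacobiTheta₂_term (-((n:ℤ)+1)) w (I*s)) := by
  have him : 0 < (I*(s:ℂ)).im := by simp [hs]
  have hf : Summable (jacobiTheta₂_term · w (I*s)) :=
    (summable_jacobiTheta₂_term_iff w _).mpr him
  have h1 : Summable (fun n : ℕ ↦ jacobiTheta₂_term ((n:ℤ)+1) w (I*s)) :=
    hf.comp_injective (i := fun n : ℕ ↦ (n:ℤ)+1) (fun a b h ↦ by simp only [] at h; omega)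
  have h2 : Summable (fun n : ℕ ↦ jacobiTheta₂_term (-((n:ℤ)+1)) w (I*s)) :=
    hf.comp_injective (i := fun n : ℕ ↦ -((n:ℤ)+1)) (fun a b h ↦ by simp only [] at h; omega)
  have h0 : Summable (fun n : ℕ ↦ jacobiTheta₂_term ((n:ℕ):ℤ) w (I*s)) :=
    hf.comp_injective (i := fun n : ℕ ↦ (n:ℤ)) (fun a b h ↦ by simp only [] at h; omega)
  rw [jacobiTheta₂, tsum_of_nat_of_neg_add_one (f := fun n : ℤ ↦ jacobiTheta₂_term n w (I*(s:ℂ))) h0 h2]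
  rw [Summable.tsum_eq_zero_add h0, Summable.tsum_add h1 h2]
  have h00 : jacobiTheta₂_term (0:ℤ) w (I*(s:ℂ)) = 1 := by simp [jacobiTheta₂_term]
  push_cast
  rw [h00]; ring

lemma exp_pair_cos (θ r : ℂ) : cexp (θ*I + r) + cexp (-(θ*I) + r) = 2*(cexp r * Complex.cos θ) := by
  rw [Complex.exp_add, Complex.exp_add,
    show (2:ℂ)*(cexp r * Complex.cos θ) = cexp r * (2*Complex.cos θ) by ring, Complex.two_cos]
  ring

lemma exp_pair_cosh (θ r : ℂ) : cexp (-θ + r) + cexp (θ + r) = 2*(cexp r * Complex.cosh θ) := by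
  rw [Complex.exp_add, Complex.exp_add,
    show (2:ℂ)*(cexp r * Complex.cosh θ) = cexp r * (2*Complex.cosh θ) by ring, Complex.two_cosh]
  ring

lemma theta_cos (a : ℝ) {s : ℝ} (hs : 0 < s) :
    jacobiTheta₂ ((a:ℂ)/(2*(π:ℂ))) (I*s) =
      ((1 + 2 * ∑' n : ℕ, Real.exp (-π*((n:ℝ)+1)^2*s) * Real.cos (a*((n:ℝ)+1))) : ℝ) := by
  have hπ : (π:ℂ) ≠ 0 := Complex.ofReal_ne_zero.mpr Real.pi_ne_zero
  rw [theta_split _ hs]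
  have key : ∀ n : ℕ, jacobiTheta₂_term ((n:ℤ)+1) ((a:ℂ)/(2*(π:ℂ))) (I*s)
      + jacobiTheta₂_term (-((n:ℤ)+1)) ((a:ℂ)/(2*(π:ℂ))) (I*s)
      = ((2 * (Real.exp (-π*((n:ℝ)+1)^2*s) * Real.cos (a*((n:ℝ)+1))) : ℝ) : ℂ) := by
    intro n
    simp only [jacobiTheta₂_term]
    have e1 : 2*(π:ℂ)*I*((((n:ℤ)+1):ℤ):ℂ)*((a:ℂ)/(2*π)) + (π:ℂ)*I*((((n:ℤ)+1):ℤ):ℂ)^2*(I*(s:ℂ))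
        = ((a:ℂ)*((n:ℂ)+1))*I + -((π:ℂ)*((n:ℂ)+1)^2*(s:ℂ)) := by
      push_cast
      field_simp
      ring_nf
      rw [Complex.I_sq]
      ring
    have e2 : 2*(π:ℂ)*I*(((-((n:ℤ)+1)):ℤ):ℂ)*((a:ℂ)/(2*π)) + (π:ℂ)*I*(((-((n:ℤ)+1)):ℤ):ℂ)^2*(I*(s:ℂ))
        = -(((a:ℂ)*((n:ℂ)+1))*I) + -((π:ℂ)*((n:ℂ)+1)^2*(s:ℂ)) := by
      push_cast
      field_simp
      ring_nf
      rw [Complex.I_sq]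
      ring
    rw [e1, e2, exp_pair_cos]
    push_cast
    ring_nf
  rw [tsum_congr key]
  rw [Complex.ofReal_add, Complex.ofReal_mul, Complex.ofReal_tsum]
  push_cast
  rw [tsum_mul_left]

lemma theta_cosh (b : ℝ) {s : ℝ} (hs : 0 < s) :
    jacobiTheta₂ (I*(b:ℂ)/(2*(π:ℂ))) (I*s) =
      ((1 + 2 * ∑' n : ℕ, Real.exp (-π*((n:ℝ)+1)^2*s) * Real.cosh (b*((n:ℝ)+1))) : ℝ) := by
  have hπ : (π:ℂ) ≠ 0 := Complex.ofReal_ne_zero.mpr Real.pi_ne_zero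
  rw [theta_split _ hs]
  have key : ∀ n : ℕ, jacobiTheta₂_term ((n:ℤ)+1) (I*(b:ℂ)/(2*(π:ℂ))) (I*s)
      + jacobiTheta₂_term (-((n:ℤ)+1)) (I*(b:ℂ)/(2*(π:ℂ))) (I*s)
      = ((2 * (Real.exp (-π*((n:ℝ)+1)^2*s) * Real.cosh (b*((n:ℝ)+1))) : ℝ) : ℂ) := by
    intro n
    simp only [jacobiTheta₂_term]
    have e1 : 2*(π:ℂ)*I*((((n:ℤ)+1):ℤ):ℂ)*(I*(b:ℂ)/(2*π)) + (π:ℂ)*I*((((n:ℤ)+1):ℤ):ℂ)^2*(I*(s:ℂ))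
        = -((b:ℂ)*((n:ℂ)+1)) + -((π:ℂ)*((n:ℂ)+1)^2*(s:ℂ)) := by
      push_cast
      field_simp
      ring_nf
      rw [Complex.I_sq]
      ring
    have e2 : 2*(π:ℂ)*I*(((-((n:ℤ)+1)):ℤ):ℂ)*(I*(b:ℂ)/(2*π)) + (π:ℂ)*I*(((-((n:ℤ)+1)):ℤ):ℂ)^2*(I*(s:ℂ))
        = ((b:ℂ)*((n:ℂ)+1)) + -((π:ℂ)*((n:ℂ)+1)^2*(s:ℂ)) := by
      push_cast
      field_simp
      ring_nf
      rw [Complex.I_sq]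
      ring
    rw [e1, e2, exp_pair_cosh]
    push_cast
    ring_nf
  rw [tsum_congr key]
  rw [Complex.ofReal_add, Complex.ofReal_mul, Complex.ofReal_tsum]
  push_cast
  rw [tsum_mul_left]

/-- the case `k = 1` of Popov's formula. -/
theorem stmt4 (x : ℝ) (hx : 0 < x) (z : ℝ) :
    x ^ ((1:ℝ)/4) * Real.exp (z^2/8)
      * (1 + 2 * ∑' n : ℕ, Real.exp (-π*((n:ℝ)+1)^2*x) * Real.cos (Real.sqrt (π*x) * ((n:ℝ)+1) * z))
    = x ^ (-(1:ℝ)/4) * Real.exp (-z^2/8)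
      * (1 + 2 * ∑' n : ℕ, Real.exp (-π*((n:ℝ)+1)^2/x) * Real.cosh (Real.sqrt (π/x) * ((n:ℝ)+1) * z)) := by
  have hx0 : (x:ℂ) ≠ 0 := Complex.ofReal_ne_zero.mpr hx.ne'
  have hπ : (π:ℂ) ≠ 0 := Complex.ofReal_ne_zero.mpr Real.pi_ne_zero
  set a : ℝ := Real.sqrt (π*x) * z with ha
  set b' : ℝ := -(Real.sqrt (π*x) * z / x) with hb'
  have hsq : Real.sqrt (π*x) / x = Real.sqrt (π/x) := by
    rw [show π/x = (π*x)/x^2 by field_simp, Real.sqrt_div (by positivity) _,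
      Real.sqrt_sq hx.le]
  have FE := jacobiTheta₂_functional_equation ((a:ℂ)/(2*(π:ℂ))) (I*(x:ℂ))
  have c1 : -I*(I*(x:ℂ)) = (x:ℂ) := by
    rw [show -I*(I*(x:ℂ)) = -(I*I)*x by ring, Complex.I_mul_I]; ring
  have c2 : (-1)/(I*(x:ℂ)) = I*(((1/x : ℝ)):ℂ) := by
    rw [div_eq_iff (by simp [Complex.I_ne_zero, hx0])]
    push_cast
    field_simp
    ring_nf
    rw [Complex.I_sq]
  have c3 : ((a:ℂ)/(2*(π:ℂ)))/(I*(x:ℂ)) = I*((b':ℝ):ℂ)/(2*(π:ℂ)) := by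
    rw [hb', ha]
    push_cast
    rw [div_eq_iff (by simp [Complex.I_ne_zero, hx0])]
    field_simp
    ring_nf
    rw [Complex.I_sq]
    ring
  have c4 : ((x:ℂ)) ^ ((1:ℂ)/2) = ((x ^ ((1:ℝ)/2) : ℝ) : ℂ) := by
    rw [show ((1:ℂ)/2) = (((1/2 : ℝ)):ℂ) by norm_num, ← Complex.ofReal_cpow hx.le]
  have ha2 : a^2 = π*x*z^2 := by
    rw [ha, mul_pow, Real.sq_sqrt (by positivity)]
  have e4 : -(π:ℂ)*I*((a:ℂ)/(2*(π:ℂ)))^2/(I*(x:ℂ)) = ((-(z^2/4) : ℝ) : ℂ) := by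
    have haC : ((a:ℝ):ℂ)^2 = (π:ℂ)*(x:ℂ)*(z:ℂ)^2 := by
      rw [← Complex.ofReal_pow, ha2]; push_cast; ring
    rw [div_eq_iff (by simp [Complex.I_ne_zero, hx0])]
    push_cast
    field_simp
    linear_combination (-4) * haC
  rw [c1, c2, c3, c4, e4, theta_cos a hx, theta_cosh b' (by positivity : (0:ℝ) < 1/x)] at FE
  have hAB : (1 + 2 * ∑' n : ℕ, Real.exp (-π*((n:ℝ)+1)^2*x) * Real.cos (a*((n:ℝ)+1)))
      = 1/(x^((1:ℝ)/2)) * Real.exp (-(z^2/4))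
        * (1 + 2 * ∑' n : ℕ, Real.exp (-π*((n:ℝ)+1)^2*(1/x)) * Real.cosh (b'*((n:ℝ)+1))) := by
    exact_mod_cast FE
  have hcos : (∑' n : ℕ, Real.exp (-π*((n:ℝ)+1)^2*x) * Real.cos (Real.sqrt (π*x) * ((n:ℝ)+1) * z))
      = ∑' n : ℕ, Real.exp (-π*((n:ℝ)+1)^2*x) * Real.cos (a*((n:ℝ)+1)) := by
    refine tsum_congr fun n ↦ ?_
    rw [show Real.sqrt (π*x) * ((n:ℝ)+1) * z = a*((n:ℝ)+1) by rw [ha]; ring]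
  have hcosh : (∑' n : ℕ, Real.exp (-π*((n:ℝ)+1)^2/x) * Real.cosh (Real.sqrt (π/x) * ((n:ℝ)+1) * z))
      = ∑' n : ℕ, Real.exp (-π*((n:ℝ)+1)^2*(1/x)) * Real.cosh (b'*((n:ℝ)+1)) := by
    refine tsum_congr fun n ↦ ?_
    rw [show -π*((n:ℝ)+1)^2/x = -π*((n:ℝ)+1)^2*(1/x) by ring,
      show b'*((n:ℝ)+1) = -(Real.sqrt (π*x)/x * z * ((n:ℝ)+1)) by rw [hb']; ring,
      Real.cosh_neg, hsq, show Real.sqrt (π/x) * z * ((n:ℝ)+1) = Real.sqrt (π/x) * ((n:ℝ)+1) * z by ring]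
  rw [hcos, hcosh, hAB]
  have hxp : x^((1:ℝ)/4) * (x^((1:ℝ)/2))⁻¹ = x^(-(1:ℝ)/4) := by
    rw [← Real.rpow_neg hx.le, ← Real.rpow_add hx]; norm_num
  have hex : Real.exp (z^2/8) * Real.exp (-(z^2/4)) = Real.exp (-z^2/8) := by
    rw [← Real.exp_add]; ring_nf
  rw [show ∀ B : ℝ, x^((1:ℝ)/4) * Real.exp (z^2/8) * (1/(x^((1:ℝ)/2)) * Real.exp (-(z^2/4)) * B)
      = (x^((1:ℝ)/4) * (x^((1:ℝ)/2))⁻¹) * (Real.exp (z^2/8) * Real.exp (-(z^2/4))) * B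
      from fun B ↦ by ring, hxp, hex]
end

section
/- Let ν > −1/2 be a real number and z ∈ ℂ. Then |Σ_{m=0}^∞ (z/2)^{2m} / (m! · Γ(m+ν+1))| ≤ e^{|Re(z)|} / Γ(ν+1). (Equivalently, |(z/2)^{−ν} I_ν(z)| ≤ e^{|Re(z)|}/Γ(ν+1), where I_ν is the modified Bessel function of the first kind.) -/
open scoped Real BigOperators

section Stmt10Aux

open MeasureTheory Set
open scoped Real

private lemma absCoshLe (w : ℂ) : ‖Complex.cosh w‖ ≤ Real.cosh w.re := by
  rw [eq_div_of_mul_eq two_ne_zero ((mul_comm _ _).trans (Complex.two_cosh w)), Real.cosh_eq]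
  calc ‖(Complex.exp w + Complex.exp (-w)) / 2‖
      ≤ (‖Complex.exp w‖ + ‖Complex.exp (-w)‖) / 2 := by
        rw [norm_div, Complex.norm_two]
        gcongr
        exact norm_add_le _ _
    _ = (Real.exp w.re + Real.exp (-w.re)) / 2 := by
        rw [Complex.norm_exp, Complex.norm_exp, Complex.neg_re]

private lemma coshLeExpAbs (x : ℝ) : Real.cosh x ≤ Real.exp |x| := by
  rw [← Real.cosh_abs, Real.cosh_eq]
  have h1 : Real.exp (-|x|) ≤ Real.exp |x| := Real.exp_le_exp.mpr (by linarith [abs_nonneg x])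
  linarith

private lemma realBeta {a b : ℝ} (ha : 0 < a) (hb : 0 < b) :
    ∫ x in (0:ℝ)..1, x ^ (a-1) * (1-x) ^ (b-1)
      = Real.Gamma a * Real.Gamma b / Real.Gamma (a+b) := by
  have key := Complex.Gamma_mul_Gamma_eq_betaIntegral (s := (a:ℂ)) (t := (b:ℂ))
    (by simpa using ha) (by simpa using hb)
  have hBeta : Complex.betaIntegral (a:ℂ) (b:ℂ)
      = ((∫ x in (0:ℝ)..1, x ^ (a-1) * (1-x) ^ (b-1) : ℝ) : ℂ) := by
    rw [Complex.betaIntegral, ← intervalIntegral.integral_ofReal]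
    apply intervalIntegral.integral_congr
    intro x hx
    rw [uIcc_of_le zero_le_one] at hx
    simp only [Complex.ofReal_mul, Complex.ofReal_cpow hx.1,
      Complex.ofReal_cpow (sub_nonneg.mpr hx.2)]
    push_cast
    ring
  rw [hBeta, Complex.Gamma_ofReal, Complex.Gamma_ofReal, ← Complex.ofReal_add,
    Complex.Gamma_ofReal, ← Complex.ofReal_mul, ← Complex.ofReal_mul] at key
  have key2 := Complex.ofReal_inj.mp key
  have hG : Real.Gamma (a+b) ≠ 0 := (Real.Gamma_pos_of_pos (by linarith)).ne'
  rw [eq_div_iff hG, mul_comm _ (Real.Gamma (a+b)), ← key2]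

private lemma realBetaIntegrable {a b : ℝ} (ha : 0 < a) (hb : 0 < b) :
    IntegrableOn (fun x : ℝ => x ^ (a-1) * (1-x) ^ (b-1)) (Ioo 0 1) := by
  have h := Complex.betaIntegral_convergent (u := (a:ℂ)) (v := (b:ℂ))
    (by simpa using ha) (by simpa using hb)
  have h2 : IntegrableOn (fun x : ℝ => ((x:ℂ) ^ ((a:ℂ)-1) * (1-(x:ℂ)) ^ ((b:ℂ)-1)))
      (Ioo 0 1) := h.1.mono_set Ioo_subset_Ioc_self
  apply (h2.re).congr
  refine (ae_restrict_iff' measurableSet_Ioo).mpr (ae_of_all _ fun x hx => ?_)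
  have e : ((x:ℂ) ^ ((a:ℂ)-1) * (1-(x:ℂ)) ^ ((b:ℂ)-1))
      = ((x ^ (a-1) * (1-x) ^ (b-1) : ℝ) : ℂ) := by
    simp only [Complex.ofReal_mul, Complex.ofReal_cpow hx.1.le,
      Complex.ofReal_cpow (by linarith [hx.2] : (0:ℝ) ≤ 1 - x)]
    push_cast
    ring
  simp [e]

private lemma sqImage : (fun t : ℝ => t^2) '' Ioo 0 1 = Ioo 0 1 := by
  ext y
  constructor
  · rintro ⟨t, ⟨ht0, ht1⟩, rfl⟩
    exact ⟨by positivity, pow_lt_one₀ ht0.le ht1 two_ne_zero⟩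
  · rintro ⟨hy0, hy1⟩
    exact ⟨Real.sqrt y, ⟨Real.sqrt_pos.mpr hy0,
      (Real.sqrt_lt' one_pos).mpr (by nlinarith)⟩, Real.sq_sqrt hy0.le⟩

private lemma substEq (g : ℝ → ℝ) :
    ∫ s in Ioo (0:ℝ) 1, g s = ∫ t in Ioo (0:ℝ) 1, |2*t| * g (t^2) := by
  have h := integral_image_eq_integral_abs_deriv_smul (f := fun t : ℝ => t^2)
    (f' := fun t : ℝ => 2*t) (s := Ioo (0:ℝ) 1) measurableSet_Ioo
    (fun x _ => by simpa using (hasDerivAt_pow 2 x).hasDerivWithinAt)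
    (fun p hp q hq h => by
      have h' : p^2 = q^2 := h
      have h2 : √(p^2) = √(q^2) := by rw [h']
      rwa [Real.sqrt_sq hp.1.le, Real.sqrt_sq hq.1.le] at h2) g
  rw [sqImage] at h
  simpa [smul_eq_mul] using h

private lemma substInt (g : ℝ → ℝ) :
    IntegrableOn g (Ioo (0:ℝ) 1) ↔
      IntegrableOn (fun t => |2*t| * g (t^2)) (Ioo (0:ℝ) 1) := by
  have h := integrableOn_image_iff_integrableOn_abs_deriv_smul (f := fun t : ℝ => t^2)
    (f' := fun t : ℝ => 2*t) (s := Ioo (0:ℝ) 1) measurableSet_Ioo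
    (fun x _ => by simpa using (hasDerivAt_pow 2 x).hasDerivWithinAt)
    (fun p hp q hq h => by
      have h' : p^2 = q^2 := h
      have h2 : √(p^2) = √(q^2) := by rw [h']
      rwa [Real.sqrt_sq hp.1.le, Real.sqrt_sq hq.1.le] at h2) g
  rw [sqImage] at h
  simpa [smul_eq_mul] using h

private lemma sqRpow {t : ℝ} (ht : 0 < t) (c : ℝ) : (t^2) ^ c = t ^ (2*c) := by
  rw [← Real.rpow_natCast t 2, ← Real.rpow_mul ht.le]
  norm_num

private lemma wInt {ν : ℝ} (hν : -1/2 < ν) :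
    IntegrableOn (fun t : ℝ => (1-t^2) ^ (ν-1/2)) (Ioo 0 1) := by
  have hb : (0:ℝ) < ν + 1/2 := by linarith
  have h := (substInt (fun s => s ^ ((1:ℝ)/2-1) * (1-s) ^ (ν+1/2-1))).mp
    (realBetaIntegrable (by norm_num) hb)
  have h2 : IntegrableOn (fun t : ℝ => 2 * (1-t^2) ^ (ν-1/2)) (Ioo 0 1) := by
    apply h.congr
    refine (ae_restrict_iff' measurableSet_Ioo).mpr (ae_of_all _ fun t ht => ?_)
    have ht0 := ht.1
    simp only
    rw [abs_of_pos (by linarith), sqRpow ht0]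
    rw [show 2*((1:ℝ)/2-1) = -1 by ring, Real.rpow_neg_one,
      show ν+1/2-1 = ν-1/2 by ring]
    field_simp
  have h3 := h2.const_mul (2⁻¹ : ℝ)
  apply h3.congr
  exact ae_of_all _ fun t => by simp only; ring

private lemma JmInt {ν : ℝ} (hν : -1/2 < ν) (m : ℕ) :
    IntegrableOn (fun t : ℝ => t^(2*m) * (1-t^2) ^ (ν-1/2)) (Ioo 0 1) := by
  apply Integrable.bdd_mul (c := 1) (wInt hν)
    (continuous_pow (2*m)).aestronglyMeasurable
  refine (ae_restrict_iff' measurableSet_Ioo).mpr (ae_of_all _ fun t ht => ?_)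
  rw [Real.norm_eq_abs, abs_of_nonneg (pow_nonneg ht.1.le _)]
  exact pow_le_one₀ ht.1.le ht.2.le

private lemma Jval {ν : ℝ} (hν : -1/2 < ν) (m : ℕ) :
    ∫ t in Ioo (0:ℝ) 1, t^(2*m) * (1-t^2) ^ (ν-1/2)
      = Real.Gamma ((m:ℝ)+1/2) * Real.Gamma (ν+1/2) / (2 * Real.Gamma ((m:ℝ)+ν+1)) := by
  have ha : (0:ℝ) < (m:ℝ)+1/2 := by positivity
  have hb : (0:ℝ) < ν+1/2 := by linarith
  have hbeta := realBeta ha hb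
  rw [intervalIntegral.integral_of_le zero_le_one, integral_Ioc_eq_integral_Ioo,
    substEq] at hbeta
  have e : EqOn (fun t : ℝ => |2*t| * ((t^2) ^ ((m:ℝ)+1/2-1) * (1-t^2) ^ (ν+1/2-1)))
      (fun t : ℝ => 2 * (t^(2*m) * (1-t^2) ^ (ν-1/2))) (Ioo 0 1) := by
    intro t ht
    have ht0 := ht.1
    simp only
    rw [abs_of_pos (by linarith), sqRpow ht0]
    have e2 : t ^ (2*((m:ℝ)+1/2-1)) = t^(2*m) * t⁻¹ := by
      rw [show 2*((m:ℝ)+1/2-1) = ((2*m:ℕ):ℝ) + (-1) by push_cast; ring,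
        Real.rpow_add ht0, Real.rpow_natCast, Real.rpow_neg_one]
    rw [e2, show ν+1/2-1 = ν-1/2 by ring]
    field_simp
  rw [setIntegral_congr_fun measurableSet_Ioo e, integral_const_mul,
    show (m:ℝ)+1/2+(ν+1/2) = (m:ℝ)+ν+1 by ring] at hbeta
  have hG : (0:ℝ) < Real.Gamma ((m:ℝ)+ν+1) :=
    Real.Gamma_pos_of_pos (by have := Nat.cast_nonneg (α := ℝ) m; linarith)
  field_simp at hbeta ⊢
  linarith

private lemma GammaHalf (m : ℕ) :
    Real.Gamma ((m:ℝ)+1/2) = (2*m).factorial * √π / (4^m * m.factorial) := by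
  have h := Real.Gamma_mul_Gamma_add_half ((m:ℝ)+1/2)
  rw [show (m:ℝ)+1/2+1/2 = ((m:ℕ):ℝ)+1 by push_cast; ring, Real.Gamma_nat_eq_factorial,
    show 2*((m:ℝ)+1/2) = ((2*m:ℕ):ℝ)+1 by push_cast; ring, Real.Gamma_nat_eq_factorial,
    show 1-(((2*m:ℕ):ℝ)+1) = -((2*m:ℕ):ℝ) by ring,
    Real.rpow_neg (by norm_num), Real.rpow_natCast,
    show (2:ℝ)^(2*m) = 4^m by rw [pow_mul]; norm_num] at h
  have h4 : (0:ℝ) < 4^m := by positivity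
  have hm : (0:ℝ) < m.factorial := by exact_mod_cast m.factorial_pos
  field_simp at h ⊢
  linear_combination h

/-- bound for the normalized modified Bessel function. -/
theorem stmt10 (ν : ℝ) (hν : -1/2 < ν) (z : ℂ) :
    ‖(∑' m : ℕ, (z/2)^(2*m) / ((m.factorial : ℂ) * ((Real.Gamma ((m:ℝ)+ν+1) : ℝ) : ℂ)))‖
      ≤ Real.exp |z.re| / Real.Gamma (ν+1) := by
  have hb : (0:ℝ) < ν+1/2 := by linarith
  have hG1 : 0 < Real.Gamma (ν+1) := Real.Gamma_pos_of_pos (by linarith)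
  have hGm : ∀ m : ℕ, 0 < Real.Gamma ((m:ℝ)+ν+1) :=
    fun m => Real.Gamma_pos_of_pos (by have := Nat.cast_nonneg (α := ℝ) m; linarith)
  set w : ℝ → ℝ := fun t => (1-t^2) ^ (ν-1/2) with hw
  set B : ℝ := √π * Real.Gamma (ν+1/2) with hB
  have hBpos : 0 < B :=
    mul_pos (Real.sqrt_pos.mpr Real.pi_pos) (Real.Gamma_pos_of_pos hb)
  set K : ℝ := ∫ t in Ioo (0:ℝ) 1, w t with hK
  set S : ℂ := ∑' m : ℕ,
    (z/2)^(2*m) / ((m.factorial : ℂ) * ((Real.Gamma ((m:ℝ)+ν+1) : ℝ) : ℂ)) with hS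
  set F : ℕ → ℝ → ℂ :=
    fun m t => z^(2*m)/((2*m).factorial : ℂ) * ((t^(2*m) * w t : ℝ) : ℂ) with hF
  have hwnonneg : ∀ t ∈ Ioo (0:ℝ) 1, 0 ≤ w t := fun t ht =>
    Real.rpow_nonneg (by nlinarith [ht.1, ht.2] : (0:ℝ) ≤ 1 - t^2) _
  have hFint : ∀ m, Integrable (F m) (volume.restrict (Ioo (0:ℝ) 1)) :=
    fun m => ((JmInt hν m).ofReal).const_mul _
  -- value of each term integral
  have hFval : ∀ m : ℕ, (∫ t in Ioo (0:ℝ) 1, F m t)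
      = ((B/2 : ℝ) : ℂ) *
        ((z/2)^(2*m) / ((m.factorial : ℂ) * ((Real.Gamma ((m:ℝ)+ν+1) : ℝ) : ℂ))) := by
    intro m
    rw [hF]
    simp only
    rw [integral_const_mul]
    have hOR : (∫ t in Ioo (0:ℝ) 1, ((t^(2*m) * w t : ℝ) : ℂ))
        = (((∫ t in Ioo (0:ℝ) 1, t^(2*m) * w t : ℝ)) : ℂ) := integral_ofReal
    rw [hOR, Jval hν m, GammaHalf m]
    have h2 : ((2*m).factorial : ℂ) ≠ 0 := by exact_mod_cast (2*m).factorial_ne_zero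
    have hm : (m.factorial : ℂ) ≠ 0 := by exact_mod_cast m.factorial_ne_zero
    have hGm' : ((Real.Gamma ((m:ℝ)+ν+1) : ℝ) : ℂ) ≠ 0 := by
      exact_mod_cast (hGm m).ne'
    have hsπ : ((√π : ℝ) : ℂ) ≠ 0 := by
      exact_mod_cast (Real.sqrt_pos.mpr Real.pi_pos).ne'
    have hGb : ((Real.Gamma (ν+1/2) : ℝ) : ℂ) ≠ 0 := by
      exact_mod_cast (Real.Gamma_pos_of_pos hb).ne'
    rw [hB]
    push_cast
    rw [show ((4:ℂ))^m = (2:ℂ)^(2*m) by rw [pow_mul]; norm_num]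
    field_simp
    rw [div_pow]; field_simp
  -- pointwise sum
  have hpt : ∀ t : ℝ, HasSum (fun m => F m t) (Complex.cosh (z*t) * (w t : ℂ)) := by
    intro t
    have h2 := (Complex.hasSum_cosh (z*t)).mul_right ((w t : ℝ) : ℂ)
    have e : (fun m => F m t)
        = fun n => (z*(t:ℂ))^(2*n)/((2*n).factorial : ℂ) * ((w t : ℝ) : ℂ) :=
      funext fun m => by rw [hF]; push_cast; ring
    rw [e]; exact h2
  -- summability of integrals of norms
  have hnorm_le : ∀ m : ℕ, (∫ t in Ioo (0:ℝ) 1, ‖F m t‖)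
      ≤ ‖z‖^(2*m)/((2*m).factorial : ℝ) * K := by
    intro m
    have e : ∀ t : ℝ, ‖F m t‖
        = ‖z‖^(2*m)/((2*m).factorial : ℝ) * |t^(2*m) * w t| := by
      intro t
      simp only [hF, norm_mul, norm_div, norm_pow,
        Complex.norm_natCast, Complex.norm_real, Real.norm_eq_abs, abs_mul, abs_pow]
    simp only [e]
    rw [integral_const_mul]
    apply mul_le_mul_of_nonneg_left _ (by positivity)
    apply setIntegral_mono_on (JmInt hν m).abs (wInt hν) measurableSet_Ioo
    intro t ht
    rw [abs_of_nonneg (mul_nonneg (pow_nonneg ht.1.le _) (hwnonneg t ht))]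
    calc t^(2*m) * w t ≤ 1 * w t := by
          apply mul_le_mul_of_nonneg_right (pow_le_one₀ ht.1.le ht.2.le) (hwnonneg t ht)
      _ = w t := one_mul _
  have hsum : Summable (fun m => ∫ t in Ioo (0:ℝ) 1, ‖F m t‖) :=
    Summable.of_nonneg_of_le (fun m => integral_nonneg fun t => norm_nonneg _) hnorm_le
      (((Real.hasSum_cosh ‖z‖).summable).mul_right K)
  have hswap := MeasureTheory.integral_tsum_of_summable_integral_norm hFint hsum
  -- the integral representation
  have hIeq : (∫ t in Ioo (0:ℝ) 1, Complex.cosh (z*t) * (w t : ℂ))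
      = ((B/2 : ℝ) : ℂ) * S := by
    calc (∫ t in Ioo (0:ℝ) 1, Complex.cosh (z*t) * (w t : ℂ))
        = ∫ t in Ioo (0:ℝ) 1, ∑' m, F m t :=
          integral_congr_ae (ae_of_all _ fun t => ((hpt t).tsum_eq).symm)
      _ = ∑' m, ∫ t in Ioo (0:ℝ) 1, F m t := hswap.symm
      _ = ∑' m : ℕ, ((B/2 : ℝ) : ℂ) *
            ((z/2)^(2*m) / ((m.factorial : ℂ) * ((Real.Gamma ((m:ℝ)+ν+1) : ℝ) : ℂ))) :=
          tsum_congr hFval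
      _ = ((B/2 : ℝ) : ℂ) * S := by rw [hS]; exact tsum_mul_left
  -- bound on cosh
  have hcb : ∀ t ∈ Ioo (0:ℝ) 1, ‖Complex.cosh (z*(t:ℂ))‖ ≤ Real.exp |z.re| := by
    intro t ht
    calc ‖Complex.cosh (z*t)‖ ≤ Real.cosh ((z*(t:ℂ)).re) := absCoshLe _
      _ ≤ Real.cosh |z.re| := by
          rw [Real.cosh_le_cosh]
          have e : (z*(t:ℝ)).re = z.re * t := by simp
          rw [e, abs_abs, abs_mul, abs_of_pos ht.1]
          nlinarith [abs_nonneg z.re, ht.1, ht.2]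
      _ ≤ Real.exp ‖|z.re|‖ := by
          have := coshLeExpAbs |z.re|
          simpa using this
      _ = Real.exp |z.re| := by rw [Real.norm_eq_abs, abs_abs]
  -- integrability of the integrand
  have hIint : Integrable (fun t : ℝ => Complex.cosh (z*(t:ℂ)) * (w t : ℂ))
      (volume.restrict (Ioo (0:ℝ) 1)) := by
    apply Integrable.bdd_mul (c := Real.exp |z.re|) ((wInt hν).ofReal)
      ((Complex.continuous_cosh.comp
        (continuous_const.mul Complex.continuous_ofReal)).aestronglyMeasurable)
    exact (ae_restrict_iff' measurableSet_Ioo).mpr (ae_of_all _ hcb)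
  -- bound the integral
  have habsI : ‖∫ t in Ioo (0:ℝ) 1, Complex.cosh (z*t) * (w t : ℂ)‖
      ≤ Real.exp |z.re| * K := by
    calc ‖∫ t in Ioo (0:ℝ) 1, Complex.cosh (z*t) * (w t : ℂ)‖
        ≤ ∫ t in Ioo (0:ℝ) 1, ‖Complex.cosh (z*t) * (w t : ℂ)‖ :=
          norm_integral_le_integral_norm _
      _ ≤ ∫ t in Ioo (0:ℝ) 1, Real.exp |z.re| * w t := by
          apply setIntegral_mono_on hIint.norm ((wInt hν).const_mul _) measurableSet_Ioo
          intro t ht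
          rw [norm_mul, Complex.norm_real, Real.norm_eq_abs, abs_of_nonneg (hwnonneg t ht)]
          exact mul_le_mul_of_nonneg_right (hcb t ht) (hwnonneg t ht)
      _ = Real.exp |z.re| * K := by rw [integral_const_mul]
  -- value of K
  have hKval : K = B / (2 * Real.Gamma (ν+1)) := by
    have h0 := Jval hν 0
    simp only [Nat.cast_zero, zero_add, Nat.mul_zero, pow_zero, one_mul] at h0
    rw [hK, hw, hB]
    rw [h0]
    norm_num [Real.Gamma_one_half_eq]
  -- conclude
  have h1 : (B/2) * ‖S‖ = ‖
      (∫ t in Ioo (0:ℝ) 1, Complex.cosh (z*t) * (w t : ℂ))‖ := by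
    rw [hIeq, norm_mul, Complex.norm_real, Real.norm_eq_abs, abs_of_pos (by positivity)]
  calc ‖S‖ = (2/B) * ((B/2) * ‖S‖) := by field_simp
    _ ≤ (2/B) * (Real.exp |z.re| * K) := by
        apply mul_le_mul_of_nonneg_left _ (by positivity)
        rw [h1]; exact habsI
    _ = Real.exp |z.re| / Real.Gamma (ν+1) := by
        rw [hKval]; field_simp

end Stmt10Aux
end

section
/- Let k ≥ 1 be an integer, α > β > 0, σ > 1/4 a real number, and X > 0. Then e^{−αX} · J_{k/4 − 1/2}(βX) = (β/(2α))^{k/4 − 1/2} / (2π Γ(k/4 + 1/2)) · ∫_{−∞}^∞ Γ(σ + it + k/4 − 1/2) · ₂F₁((4(σ+it) + k − 2)/8, (4(σ+it) + k + 2)/8; k/4 + 1/2; −β²/α²) · (αX)^{−σ−it} dt. -/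
open scoped Real BigOperators

namespace Stmt12Aux

open MeasureTheory Set Filter Complex
open scoped Real Topology

lemma normGammaLe {s : ℂ} (hs : 0 < s.re) : ‖Complex.Gamma s‖ ≤ Real.Gamma s.re := by
  rw [Complex.Gamma_eq_integral hs, Real.Gamma_eq_integral hs, Complex.GammaIntegral]
  refine (norm_integral_le_integral_norm _).trans_eq ?_
  refine setIntegral_congr_fun measurableSet_Ioi fun x hx => ?_
  rw [norm_mul, Complex.norm_real,
    Complex.norm_cpow_eq_rpow_re_of_pos hx]
  simp [_root_.abs_of_nonneg (Real.exp_pos _).le]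

lemma lineNeNeg (c : ℝ) (hc : 0 < c) (t : ℝ) (m : ℕ) : (c:ℂ) + t * Complex.I ≠ -m := by
  intro h
  have h2 : ((c:ℂ) + t * Complex.I).re = (-(m:ℂ)).re := by rw [h]
  simp at h2
  have hm : (0:ℝ) ≤ m := Nat.cast_nonneg m
  linarith

lemma contGammaLine (c : ℝ) (hc : 0 < c) :
    Continuous fun t : ℝ => Complex.Gamma (c + t * Complex.I) := by
  refine continuous_iff_continuousAt.mpr fun t => ?_
  have : ContinuousAt Complex.Gamma ((c:ℂ) + t * Complex.I) :=
    (Complex.differentiableAt_Gamma _ (lineNeNeg c hc t)).continuousAt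
  exact this.comp (x := t) (by fun_prop)

lemma normGammaLine_le (c : ℝ) (hc : 0 < c) (t : ℝ) :
    ‖Complex.Gamma (c + t * Complex.I)‖ ≤ Real.Gamma (c+2) / (c^2 + t^2) := by
  set s : ℂ := c + t * Complex.I with hs
  have hre : s.re = c := by simp [hs]
  have hs0 : s ≠ 0 := by
    intro h; rw [h] at hre; simp at hre; linarith
  have hs1 : s + 1 ≠ 0 := by
    intro h
    have := congrArg Complex.re h
    simp [hre] at this; linarith
  have key : Complex.Gamma (s + 2) = s * (s+1) * Complex.Gamma s := by
    have h1 : Complex.Gamma (s + 1) = s * Complex.Gamma s := Complex.Gamma_add_one s hs0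
    have h2 : Complex.Gamma ((s + 1) + 1) = (s+1) * Complex.Gamma (s+1) :=
      Complex.Gamma_add_one (s+1) hs1
    rw [show s + 2 = (s+1)+1 by ring, h2, h1]; ring
  have hG : Complex.Gamma s = Complex.Gamma (s+2) / (s * (s+1)) := by
    rw [key]
    field_simp
  rw [hG, norm_div, norm_mul]
  have h1 : ‖Complex.Gamma (s+2)‖ ≤ Real.Gamma (c+2) := by
    have := normGammaLe (s := s+2) (by simp [hre]; linarith)
    simpa [hre] using this
  have h2 : Real.sqrt (c^2+t^2) ≤ ‖s‖ := by
    rw [hs]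
    rw [Complex.norm_def, Complex.normSq_apply]
    simp [sq]
  have h3 : Real.sqrt (c^2+t^2) ≤ ‖s+1‖ := by
    have : ‖s+1‖ = Real.sqrt ((c+1)^2+t^2) := by
      rw [Complex.norm_def, Complex.normSq_apply]
      simp [hs]; ring_nf
    rw [this]
    apply Real.sqrt_le_sqrt; nlinarith
  have hpos : (0:ℝ) < c^2 + t^2 := by positivity
  have h4 : c^2 + t^2 ≤ ‖s‖ * ‖s+1‖ := by
    calc c^2+t^2 = Real.sqrt (c^2+t^2) * Real.sqrt (c^2+t^2) := by
          rw [Real.mul_self_sqrt hpos.le]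
      _ ≤ ‖s‖ * ‖s+1‖ := by
          apply mul_le_mul h2 h3 (Real.sqrt_nonneg _) (norm_nonneg _)
  exact div_le_div₀ (Real.Gamma_pos_of_pos (by linarith)).le h1 hpos h4

lemma integrableGammaLine (c : ℝ) (hc : 0 < c) {h : ℝ → ℂ} (hm : AEStronglyMeasurable h volume)
    {K : ℝ} (hK : ∀ t, ‖h t‖ ≤ K) :
    Integrable (fun t : ℝ => Complex.Gamma (c + t * Complex.I) * h t) := by
  have hK0 : 0 ≤ K := (norm_nonneg (h 0)).trans (hK 0)
  set m := min (c^2) 1 with hm'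
  have hmpos : 0 < m := lt_min (by positivity) one_pos
  refine Integrable.mono' ((integrable_inv_one_add_sq).const_mul (Real.Gamma (c+2) * K / m))
    ((contGammaLine c hc).aestronglyMeasurable.mul hm) ?_
  filter_upwards with t
  rw [norm_mul]
  have h1 := normGammaLine_le c hc t
  have h2 : m * (1 + t^2) ≤ c^2 + t^2 := by
    have hm1 : m ≤ c^2 := min_le_left _ _
    have hm2 : m ≤ 1 := min_le_right _ _
    nlinarith [sq_nonneg t]
  have hpos : (0:ℝ) < c^2 + t^2 := by positivity
  have hpos2 : (0:ℝ) < 1 + t^2 := by positivity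
  have hG2 : 0 < Real.Gamma (c+2) := Real.Gamma_pos_of_pos (by linarith)
  calc ‖Complex.Gamma (c + t * Complex.I)‖ * ‖h t‖
      ≤ (Real.Gamma (c+2) / (c^2+t^2)) * K := by
        apply mul_le_mul h1 (hK t) (norm_nonneg _) (by positivity)
    _ = Real.Gamma (c+2) * K / (c^2+t^2) := by ring
    _ ≤ Real.Gamma (c+2) * K / (m*(1+t^2)) := by
        apply div_le_div_of_nonneg_left (by positivity) (by positivity) h2
    _ = Real.Gamma (c+2) * K / m * (1+t^2)⁻¹ := by
        field_simp

lemma gammaLineIntegral (c : ℝ) (hc : 0 < c) (y : ℝ) (hy : 0 < y) :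
    ∫ t : ℝ, Complex.Gamma (c + t * Complex.I) * (y:ℂ) ^ (-(c:ℂ) - t * Complex.I)
      = 2 * π * Real.exp (-y) := by
  set f : ℝ → ℂ := fun x => ((Real.exp (-x) : ℝ) : ℂ) with hf'
  have hmel : ∀ s : ℂ, 0 < s.re → mellin f s = Complex.Gamma s := by
    intro s hs
    rw [Complex.Gamma_eq_integral hs, Complex.GammaIntegral, mellin]
    refine setIntegral_congr_fun measurableSet_Ioi fun x hx => ?_
    simp only [hf', smul_eq_mul]
    ring
  have hf : MellinConvergent f c := by
    have := Complex.GammaIntegral_convergent (s := (c:ℂ)) (by simpa using hc)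
    refine this.congr_fun ?_ measurableSet_Ioi
    intro x hx
    simp only [hf', smul_eq_mul]
    ring
  have hFf : Complex.VerticalIntegrable (mellin f) c := by
    have hint : Integrable (fun t : ℝ => Complex.Gamma (c + t * Complex.I) * 1) :=
      integrableGammaLine c hc aestronglyMeasurable_const (K := 1) (fun t => by norm_num)
    refine (hint.congr ?_)
    filter_upwards with t
    rw [mul_one, ← hmel ((c:ℂ) + t * Complex.I) (by simp [hc])]
  have hcont : ContinuousAt f y := by fun_prop
  have hinv := mellinInv_mellin_eq c f hy hf hFf hcont
  rw [mellinInv] at hinv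
  have hint2 : (∫ t : ℝ, ((y:ℂ)) ^ (-((c:ℂ) + t * Complex.I)) • mellin f ((c:ℂ) + t * Complex.I))
      = ∫ t : ℝ, Complex.Gamma (c + t * Complex.I) * (y:ℂ) ^ (-(c:ℂ) - t * Complex.I) := by
    congr 1; funext t
    rw [hmel ((c:ℂ) + t * Complex.I) (by simp [hc]), smul_eq_mul, mul_comm]
    ring_nf
  rw [hint2] at hinv
  rw [Complex.real_smul] at hinv
  have h2π : ((2 * π : ℝ) : ℂ) ≠ 0 := by
    simp [Real.pi_ne_zero]
  have h3 := congrArg (fun z => ((2*π:ℝ):ℂ) * z) hinv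
  rw [← mul_assoc] at h3
  have h4 : ((2*π:ℝ):ℂ) * ((1/(2*π):ℝ):ℂ) = 1 := by
    push_cast
    rw [mul_one_div, div_self (by simpa using h2π)]
  rw [h4, one_mul] at h3
  rw [h3, hf']
  push_cast
  ring

lemma pochDup (x : ℂ) (n : ℕ) :
    (ascPochhammer ℂ n).eval (x/2) * (ascPochhammer ℂ n).eval ((x+1)/2) * 4^n
      = (ascPochhammer ℂ (2*n)).eval x := by
  induction n with
  | zero => simp
  | succ n ih =>
    rw [show 2*(n+1) = (2*n+1)+1 by ring]
    rw [ascPochhammer_succ_right, ascPochhammer_succ_right, ascPochhammer_succ_right]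
    simp only [Polynomial.eval_mul, Polynomial.eval_add, Polynomial.eval_X,
      Polynomial.eval_natCast]
    rw [← ih]
    push_cast
    ring

lemma gammaShiftC (z : ℂ) (hz : 0 < z.re) (n : ℕ) :
    Complex.Gamma (z + n) = Complex.Gamma z * (ascPochhammer ℂ n).eval z := by
  induction n with
  | zero => simp
  | succ n ih =>
    have hne : z + n ≠ 0 := by
      intro h
      have := congrArg Complex.re h
      simp at this
      have : (0:ℝ) ≤ n := Nat.cast_nonneg n
      linarith
    have h1 : z + ((n:ℂ)+1) = (z + n) + 1 := by ring
    push_cast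
    rw [h1, Complex.Gamma_add_one _ hne, ih, ascPochhammer_succ_right]
    simp only [Polynomial.eval_mul, Polynomial.eval_add, Polynomial.eval_X,
      Polynomial.eval_natCast]
    ring

lemma gammaShiftR (x : ℝ) (hx : 0 < x) (n : ℕ) :
    Real.Gamma (x + n) = Real.Gamma x * (ascPochhammer ℝ n).eval x := by
  induction n with
  | zero => simp
  | succ n ih =>
    have hne : x + n ≠ 0 := by positivity
    have h1 : x + ((n:ℝ)+1) = (x + n) + 1 := by ring
    push_cast
    rw [h1, Real.Gamma_add_one hne, ih, ascPochhammer_succ_right]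
    simp only [Polynomial.eval_mul, Polynomial.eval_add, Polynomial.eval_X,
      Polynomial.eval_natCast]
    ring

lemma pochCast (x : ℝ) (n : ℕ) :
    (ascPochhammer ℂ n).eval (x:ℂ) = (((ascPochhammer ℝ n).eval x : ℝ) : ℂ) := by
  induction n with
  | zero => simp
  | succ n ih =>
    rw [ascPochhammer_succ_right, ascPochhammer_succ_right]
    simp only [Polynomial.eval_mul, Polynomial.eval_add, Polynomial.eval_X,
      Polynomial.eval_natCast, ih]
    push_cast
    ring

lemma pochPos' {x : ℝ} (hx : 0 < x) (n : ℕ) : 0 < (ascPochhammer ℝ n).eval x := by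
  induction n with
  | zero => simp
  | succ n ih =>
    rw [ascPochhammer_succ_right]
    simp only [Polynomial.eval_mul, Polynomial.eval_add, Polynomial.eval_X,
      Polynomial.eval_natCast]
    have : (0:ℝ) ≤ n := Nat.cast_nonneg n
    nlinarith

lemma hypExpand (S : ℂ) (hS : 0 < S.re) (c0 : ℝ) (u P : ℂ) :
    Complex.Gamma S * hyp2F1 (S/2) ((S+1)/2) ((c0:ℝ):ℂ) (4*u) * P
      = ∑' ℓ : ℕ, Complex.Gamma (S + 2*(ℓ:ℂ)) *
          (u^ℓ / ((((ascPochhammer ℝ ℓ).eval c0 : ℝ):ℂ) * (ℓ.factorial : ℂ))) * P := by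
  rw [hyp2F1, ← tsum_mul_left, ← tsum_mul_right]
  refine tsum_congr fun ℓ => ?_
  rw [pochCast c0 ℓ, show S + 2*(ℓ:ℂ) = S + ((2*ℓ:ℕ):ℂ) by push_cast; ring,
    gammaShiftC S hS (2*ℓ), ← pochDup S ℓ, mul_pow]
  ring

lemma Dsummable (a c0 q : ℝ) (ha : 0 < a) (hc0 : 0 < c0) (hq : 0 < q) (hq4 : 4*q < 1) :
    Summable (fun ℓ : ℕ => q^ℓ * Real.Gamma (a + 2*ℓ + 2) /
      ((ascPochhammer ℝ ℓ).eval c0 * ℓ.factorial)) := by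
  set D : ℕ → ℝ := fun ℓ => q^ℓ * Real.Gamma (a + 2*ℓ + 2) /
      ((ascPochhammer ℝ ℓ).eval c0 * ℓ.factorial) with hD
  have hDpos : ∀ ℓ, 0 < D ℓ := by
    intro ℓ
    have h1 : 0 < Real.Gamma (a + 2*ℓ + 2) := Real.Gamma_pos_of_pos (by positivity)
    have h2 := pochPos' hc0 ℓ
    have h3 : (0:ℝ) < ℓ.factorial := by exact_mod_cast ℓ.factorial_pos
    positivity
  set g : ℕ → ℝ := fun ℓ => q * ((a+2*ℓ+2)/((ℓ:ℝ)+1)) * ((a+2*ℓ+3)/(c0+ℓ)) with hg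
  have hratio : ∀ ℓ : ℕ, D (ℓ+1) = g ℓ * D ℓ := by
    intro ℓ
    have hγ : Real.Gamma (a + 2*(ℓ+1:ℕ) + 2) = (a+2*ℓ+3)*((a+2*ℓ+2) * Real.Gamma (a+2*ℓ+2)) := by
      have e1 : a + 2*((ℓ:ℝ)+1) + 2 = (a + 2*ℓ + 3) + 1 := by ring
      push_cast
      rw [e1, Real.Gamma_add_one (by positivity)]
      congr 1
      rw [show a + 2*(ℓ:ℝ) + 3 = (a + 2*ℓ + 2) + 1 by ring, Real.Gamma_add_one (by positivity)]
    have hpoch : (ascPochhammer ℝ (ℓ+1)).eval c0 = (ascPochhammer ℝ ℓ).eval c0 * (c0 + ℓ) := by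
      rw [ascPochhammer_succ_right]
      simp [Polynomial.eval_mul]
    have hfac : ((ℓ+1 : ℕ).factorial : ℝ) = (ℓ.factorial : ℝ) * ((ℓ:ℝ)+1) := by
      rw [Nat.factorial_succ]; push_cast; ring
    rw [hD]
    simp only
    rw [hγ, hpoch, hfac, hg]
    have h2 := (pochPos' hc0 ℓ).ne'
    have h3 : ((ℓ.factorial : ℝ)) ≠ 0 := by positivity
    have h4 : (ℓ:ℝ)+1 ≠ 0 := by positivity
    have h5 : c0 + ℓ ≠ 0 := by positivity
    push_cast
    field_simp
    ring
  have hgt : Tendsto g atTop (nhds (q * 2 * 2)) := by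
    have hden1 : Tendsto (fun ℓ:ℕ => (ℓ:ℝ)+1) atTop atTop :=
      tendsto_atTop_add_const_right _ 1 tendsto_natCast_atTop_atTop
    have hden2 : Tendsto (fun ℓ:ℕ => c0+(ℓ:ℝ)) atTop atTop :=
      tendsto_atTop_add_const_left _ c0 tendsto_natCast_atTop_atTop
    have h1 : Tendsto (fun ℓ:ℕ => (a+2*ℓ+2)/((ℓ:ℝ)+1)) atTop (nhds 2) := by
      have e : ∀ ℓ:ℕ, (a+2*(ℓ:ℝ)+2)/((ℓ:ℝ)+1) = 2 + a/((ℓ:ℝ)+1) := by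
        intro ℓ
        have h4 : (ℓ:ℝ)+1 ≠ 0 := by positivity
        field_simp
        ring
      simp only [e]
      simpa using (tendsto_const_nhds (x := (2:ℝ))).add
        (Tendsto.div_atTop (tendsto_const_nhds (x := a)) hden1)
    have h2 : Tendsto (fun ℓ:ℕ => (a+2*ℓ+3)/(c0+(ℓ:ℝ))) atTop (nhds 2) := by
      have e : ∀ ℓ:ℕ, (a+2*(ℓ:ℝ)+3)/(c0+(ℓ:ℝ)) = 2 + (a+3-2*c0)/(c0+(ℓ:ℝ)) := by
        intro ℓ
        have h5 : c0+(ℓ:ℝ) ≠ 0 := by positivity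
        field_simp
        ring
      simp only [e]
      simpa using (tendsto_const_nhds (x := (2:ℝ))).add
        (Tendsto.div_atTop (tendsto_const_nhds (x := a+3-2*c0)) hden2)
    exact (tendsto_const_nhds.mul h1).mul h2
  have hlim : q * 2 * 2 < (1 + 4*q)/2 := by linarith
  refine summable_of_ratio_norm_eventually_le (r := (1+4*q)/2) (by linarith) ?_
  filter_upwards [hgt.eventually_le_const hlim] with ℓ hℓ
  rw [Real.norm_of_nonneg (hDpos _).le, Real.norm_of_nonneg (hDpos _).le, hratio ℓ]
  exact mul_le_mul_of_nonneg_right hℓ (hDpos ℓ).le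

lemma termId (α β X ν : ℝ) (hα : 0 < α) (hβ : 0 < β) (hX : 0 < X) (hν1 : 0 < ν + 1) (m : ℕ) :
    (β/(2*α))^ν / (2*π*Real.Gamma (ν+1)) *
      ((-(β^2/(4*α^2)))^m / ((ascPochhammer ℝ m).eval (ν+1) * m.factorial) *
        (α*X)^(ν+2*(m:ℝ)) * (2*π*Real.exp (-(α*X))))
    = Real.exp (-(α*X)) * ((-1)^m * (β*X/2)^(2*(m:ℝ)+ν) / (m.factorial * Real.Gamma ((m:ℝ)+ν+1))) := by
  have hy : 0 < α*X := by positivity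
  have hb2 : 0 < β*X/2 := by positivity
  have hΓ : Real.Gamma ((m:ℝ)+ν+1) = Real.Gamma (ν+1) * (ascPochhammer ℝ m).eval (ν+1) := by
    rw [show (m:ℝ)+ν+1 = (ν+1)+(m:ℕ) by push_cast; ring]
    exact gammaShiftR _ hν1 m
  have hsplit1 : (α*X)^(ν+2*(m:ℝ)) = (α*X)^ν * ((α*X)^2)^m := by
    rw [Real.rpow_add hy, show (2*(m:ℝ)) = ((2*m:ℕ):ℝ) by push_cast; ring,
      Real.rpow_natCast, pow_mul]
  have hsplit2 : (β*X/2)^(2*(m:ℝ)+ν) = (β*X/2)^ν * ((β*X/2)^2)^m := by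
    rw [add_comm, Real.rpow_add hb2, show (2*(m:ℝ)) = ((2*m:ℕ):ℝ) by push_cast; ring,
      Real.rpow_natCast, pow_mul]
  have hbase : (β/(2*α))^ν * (α*X)^ν = (β*X/2)^ν := by
    rw [← Real.mul_rpow (by positivity) hy.le]
    congr 1
    field_simp
  have hqy : (β^2/(4*α^2)) * (α*X)^2 = (β*X/2)^2 := by
    field_simp
    ring
  have hneg : (-(β^2/(4*α^2)))^m = (-1)^m * (β^2/(4*α^2))^m := by
    rw [neg_pow]
  have hpow : (β^2/(4*α^2))^m * ((α*X)^2)^m = ((β*X/2)^2)^m := by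
    rw [← mul_pow, hqy]
  have hΓpos : 0 < Real.Gamma (ν+1) := Real.Gamma_pos_of_pos hν1
  have hppos := pochPos' hν1 m
  have hfpos : (0:ℝ) < m.factorial := by exact_mod_cast m.factorial_pos
  rw [hΓ, hsplit1, hsplit2, hneg, ← hbase, ← hpow]
  field_simp

end Stmt12Aux

set_option maxHeartbeats 2000000 in
/-- Mellin inversion formula for `e^{-αX} J_{k/4-1/2}(βX)`. -/
theorem stmt12 (k : ℕ) (hk : 1 ≤ k) (α β : ℝ) (hβ : 0 < β) (hβα : β < α)
    (σ : ℝ) (hσ : 1/4 < σ) (X : ℝ) (hX : 0 < X) :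
    ((Real.exp (-α*X) * besselJ ((k:ℝ)/4 - 1/2) (β*X) : ℝ) : ℂ)
    = (((β/(2*α)) ^ ((k:ℝ)/4 - 1/2) / (2*π*Real.Gamma ((k:ℝ)/4 + 1/2)) : ℝ) : ℂ) *
      ∫ t : ℝ, Complex.Gamma ((σ:ℂ) + Complex.I*(t:ℂ) + (k:ℂ)/4 - 1/2)
        * hyp2F1 ((4*((σ:ℂ)+Complex.I*(t:ℂ))+(k:ℂ)-2)/8) ((4*((σ:ℂ)+Complex.I*(t:ℂ))+(k:ℂ)+2)/8)
            ((k:ℂ)/4 + 1/2) (-((β:ℂ))^2/((α:ℂ))^2)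
        * ((α*X : ℝ) : ℂ) ^ (-(σ:ℂ) - Complex.I*(t:ℂ)) := by
  classical
  have hα : 0 < α := hβ.trans hβα
  have hk1 : (1:ℝ) ≤ (k:ℝ) := by exact_mod_cast hk
  set ν : ℝ := (k:ℝ)/4 - 1/2 with hνdef
  clear_value ν
  have hν : -(1/4 : ℝ) ≤ ν := by rw [hνdef]; linarith
  have hc0 : 0 < ν + 1 := by linarith
  have ha : 0 < σ + ν := by linarith
  have hy : 0 < α * X := by positivity
  have hq : 0 < β^2/(4*α^2) := by positivity
  have hq4 : 4*(β^2/(4*α^2)) < 1 := by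
    rw [show 4*(β^2/(4*α^2)) = β^2/α^2 by field_simp]
    rw [div_lt_one (by positivity)]
    nlinarith
  set q : ℝ := β^2/(4*α^2) with hqdef
  clear_value q
  set F : ℕ → ℝ → ℂ := fun ℓ t =>
    Complex.Gamma (((σ+ν+2*(ℓ:ℝ) : ℝ):ℂ) + (t:ℂ) * Complex.I) *
      ((((-q)^ℓ / ((ascPochhammer ℝ ℓ).eval (ν+1) * ℓ.factorial) : ℝ) : ℂ) *
        ((α*X : ℝ):ℂ) ^ (-(σ:ℂ) - Complex.I*(t:ℂ))) with hF
  clear_value F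
  -- pointwise expansion of the integrand as a series
  have hpt : ∀ t : ℝ,
      Complex.Gamma ((σ:ℂ) + Complex.I*(t:ℂ) + (k:ℂ)/4 - 1/2)
        * hyp2F1 ((4*((σ:ℂ)+Complex.I*(t:ℂ))+(k:ℂ)-2)/8) ((4*((σ:ℂ)+Complex.I*(t:ℂ))+(k:ℂ)+2)/8)
            ((k:ℂ)/4 + 1/2) (-((β:ℂ))^2/((α:ℂ))^2)
        * ((α*X : ℝ) : ℂ) ^ (-(σ:ℂ) - Complex.I*(t:ℂ)) = ∑' ℓ : ℕ, F ℓ t := by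
    intro t
    have e1 : (σ:ℂ) + Complex.I*(t:ℂ) + (k:ℂ)/4 - 1/2 = ((σ+ν:ℝ):ℂ) + (t:ℂ)*Complex.I := by
      push_cast [hνdef]; ring
    have e2 : (4*((σ:ℂ)+Complex.I*(t:ℂ))+(k:ℂ)-2)/8 = (((σ+ν:ℝ):ℂ) + (t:ℂ)*Complex.I)/2 := by
      push_cast [hνdef]; ring
    have e3 : (4*((σ:ℂ)+Complex.I*(t:ℂ))+(k:ℂ)+2)/8
        = ((((σ+ν:ℝ):ℂ) + (t:ℂ)*Complex.I)+1)/2 := by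
      push_cast [hνdef]; ring
    have e4 : ((k:ℂ)/4 + 1/2) = ((ν+1 : ℝ):ℂ) := by push_cast [hνdef]; ring
    have e5 : -((β:ℂ))^2/((α:ℂ))^2 = 4 * ((-q : ℝ) : ℂ) := by
      rw [hqdef]; push_cast; field_simp
    have hSre : (0:ℝ) < ((((σ+ν:ℝ):ℂ)) + (t:ℂ)*Complex.I).re := by simpa using ha
    rw [e1, e2, e3, e4, e5,
      Stmt12Aux.hypExpand (((σ+ν:ℝ):ℂ) + (t:ℂ)*Complex.I) hSre (ν+1) ((-q : ℝ):ℂ)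
        (((α*X : ℝ) : ℂ) ^ (-(σ:ℂ) - Complex.I*(t:ℂ)))]
    refine tsum_congr fun ℓ => ?_
    have g1 : (((σ+ν:ℝ):ℂ) + (t:ℂ)*Complex.I) + 2*(ℓ:ℂ)
        = ((σ+ν+2*(ℓ:ℝ):ℝ):ℂ) + (t:ℂ)*Complex.I := by push_cast; ring
    have g2 : ((-q:ℝ):ℂ)^ℓ / ((((ascPochhammer ℝ ℓ).eval (ν+1) : ℝ):ℂ) * (ℓ.factorial:ℂ))
        = (((-q)^ℓ / ((ascPochhammer ℝ ℓ).eval (ν+1) * ℓ.factorial) : ℝ) : ℂ) := by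
      push_cast; ring
    rw [g1, g2, hF]
    ring
  -- integrability of each term
  have hKnorm : ∀ ℓ : ℕ, ∀ t : ℝ,
      ‖(((-q)^ℓ / ((ascPochhammer ℝ ℓ).eval (ν+1) * ℓ.factorial) : ℝ) : ℂ) *
        ((α*X : ℝ):ℂ) ^ (-(σ:ℂ) - Complex.I*(t:ℂ))‖
      = q^ℓ / ((ascPochhammer ℝ ℓ).eval (ν+1) * ℓ.factorial) * (α*X)^(-σ) := by
    intro ℓ t
    have hp := Stmt12Aux.pochPos' hc0 ℓ
    have hfp : (0:ℝ) < ℓ.factorial := by exact_mod_cast ℓ.factorial_pos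
    rw [norm_mul,
      Complex.norm_cpow_eq_rpow_re_of_pos hy, Complex.norm_real, Real.norm_eq_abs]
    have hre : (-(σ:ℂ) - Complex.I*(t:ℂ)).re = -σ := by simp
    rw [hre, abs_div, abs_pow, abs_neg, _root_.abs_of_pos hq,
      _root_.abs_of_pos (mul_pos hp hfp)]
  have hFmeas : ∀ ℓ : ℕ, MeasureTheory.AEStronglyMeasurable
      (fun t : ℝ => (((-q)^ℓ / ((ascPochhammer ℝ ℓ).eval (ν+1) * ℓ.factorial) : ℝ) : ℂ) *
        ((α*X : ℝ):ℂ) ^ (-(σ:ℂ) - Complex.I*(t:ℂ))) MeasureTheory.volume := by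
    intro ℓ
    refine (continuous_const.mul ?_).aestronglyMeasurable
    refine Continuous.const_cpow (by fun_prop) (Or.inl ?_)
    simpa using hy.ne'
  have hFint : ∀ ℓ : ℕ, MeasureTheory.Integrable (F ℓ) := by
    intro ℓ
    simp only [hF]
    exact Stmt12Aux.integrableGammaLine (σ+ν+2*(ℓ:ℝ)) (by positivity) (hFmeas ℓ)
      (K := q^ℓ / ((ascPochhammer ℝ ℓ).eval (ν+1) * ℓ.factorial) * (α*X)^(-σ))
      (fun t => le_of_eq (hKnorm ℓ t))
  -- summability of the integrals of norms
  set m0 : ℝ := min ((σ+ν)^2) 1 with hm0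
  clear_value m0
  have hm0pos : 0 < m0 := by rw [hm0]; exact lt_min (by positivity) one_pos
  set D : ℕ → ℝ := fun ℓ => q^ℓ * Real.Gamma (σ+ν + 2*ℓ + 2) /
      ((ascPochhammer ℝ ℓ).eval (ν+1) * ℓ.factorial) with hD
  clear_value D
  have hnormb : ∀ ℓ : ℕ, ∀ t : ℝ,
      ‖F ℓ t‖ ≤ (D ℓ * ((α*X)^(-σ) / m0)) * (1+t^2)⁻¹ := by
    intro ℓ t
    have hc : (0:ℝ) < σ+ν+2*(ℓ:ℝ) := by positivity
    have hp := Stmt12Aux.pochPos' hc0 ℓ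
    have hfp : (0:ℝ) < ℓ.factorial := by exact_mod_cast ℓ.factorial_pos
    have hG := Stmt12Aux.normGammaLine_le (σ+ν+2*(ℓ:ℝ)) hc t
    have hGpos : 0 < Real.Gamma (σ+ν+2*(ℓ:ℝ)+2) := Real.Gamma_pos_of_pos (by linarith)
    have hden : m0 * (1+t^2) ≤ (σ+ν+2*(ℓ:ℝ))^2 + t^2 := by
      have h1 : m0 ≤ (σ+ν)^2 := by rw [hm0]; exact min_le_left _ _
      have h2 : m0 ≤ 1 := by rw [hm0]; exact min_le_right _ _
      have h3 : (σ+ν)^2 ≤ (σ+ν+2*(ℓ:ℝ))^2 := by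
        have : (0:ℝ) ≤ (ℓ:ℝ) := Nat.cast_nonneg ℓ
        nlinarith
      nlinarith [sq_nonneg t]
    rw [hF]
    simp only
    rw [norm_mul, hKnorm ℓ t]
    have hstep : ‖Complex.Gamma (((σ+ν+2*(ℓ:ℝ) : ℝ):ℂ) + (t:ℂ) * Complex.I)‖
        ≤ Real.Gamma (σ+ν+2*(ℓ:ℝ)+2) / (m0 * (1+t^2)) := by
      refine hG.trans ?_
      apply div_le_div_of_nonneg_left hGpos.le (by positivity) hden
    calc ‖Complex.Gamma (((σ+ν+2*(ℓ:ℝ) : ℝ):ℂ) + (t:ℂ) * Complex.I)‖ *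
          (q^ℓ / ((ascPochhammer ℝ ℓ).eval (ν+1) * ℓ.factorial) * (α*X)^(-σ))
        ≤ Real.Gamma (σ+ν+2*(ℓ:ℝ)+2) / (m0 * (1+t^2)) *
          (q^ℓ / ((ascPochhammer ℝ ℓ).eval (ν+1) * ℓ.factorial) * (α*X)^(-σ)) := by
          apply mul_le_mul_of_nonneg_right hstep (by positivity)
      _ = (D ℓ * ((α*X)^(-σ) / m0)) * (1+t^2)⁻¹ := by
          rw [hD]
          simp only
          field_simp
  have hDsum : Summable D := by
    rw [hD]; exact Stmt12Aux.Dsummable (σ+ν) (ν+1) q ha hc0 hq hq4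
  have hsumnorm : Summable (fun ℓ : ℕ => ∫ t : ℝ, ‖F ℓ t‖) := by
    refine Summable.of_nonneg_of_le (fun ℓ => MeasureTheory.integral_nonneg fun t => norm_nonneg _)
      (fun ℓ => ?_) (hDsum.mul_right ((α*X)^(-σ) / m0 * π))
    calc (∫ t : ℝ, ‖F ℓ t‖)
        ≤ ∫ t : ℝ, (D ℓ * ((α*X)^(-σ) / m0)) * (1+t^2)⁻¹ := by
          refine MeasureTheory.integral_mono (hFint ℓ).norm
            (integrable_inv_one_add_sq.const_mul _) (hnormb ℓ)
      _ = D ℓ * ((α*X)^(-σ) / m0 * π) := by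
          rw [MeasureTheory.integral_const_mul, integral_univ_inv_one_add_sq]
          ring
  have hswap : ∑' ℓ : ℕ, (∫ t : ℝ, F ℓ t) = ∫ t : ℝ, ∑' ℓ : ℕ, F ℓ t :=
    MeasureTheory.integral_tsum_of_summable_integral_norm hFint hsumnorm
  -- value of each term integral
  have hint : ∀ ℓ : ℕ, (∫ t : ℝ, F ℓ t)
      = (((-q)^ℓ / ((ascPochhammer ℝ ℓ).eval (ν+1) * ℓ.factorial) : ℝ) : ℂ) *
          (((α*X)^(ν+2*(ℓ:ℝ)) : ℝ) : ℂ) * (2 * (π:ℂ) * Real.exp (-(α*X))) := by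
    intro ℓ
    have hsp : ∀ t : ℝ, F ℓ t
        = ((((-q)^ℓ / ((ascPochhammer ℝ ℓ).eval (ν+1) * ℓ.factorial) : ℝ) : ℂ) *
            (((α*X)^(ν+2*(ℓ:ℝ)) : ℝ) : ℂ)) *
          (Complex.Gamma (((σ+ν+2*(ℓ:ℝ) : ℝ):ℂ) + (t:ℂ) * Complex.I) *
            ((α*X : ℝ):ℂ) ^ (-((σ+ν+2*(ℓ:ℝ) : ℝ):ℂ) - (t:ℂ) * Complex.I)) := by
      intro t
      have hcp : ((α*X : ℝ):ℂ) ^ (-(σ:ℂ) - Complex.I*(t:ℂ))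
          = (((α*X)^(ν+2*(ℓ:ℝ)) : ℝ) : ℂ) *
            ((α*X : ℝ):ℂ) ^ (-((σ+ν+2*(ℓ:ℝ) : ℝ):ℂ) - (t:ℂ) * Complex.I) := by
        rw [Complex.ofReal_cpow hy.le,
          ← Complex.cpow_add _ _ (by simpa using hy.ne' : ((α*X : ℝ):ℂ) ≠ 0)]
        congr 1
        push_cast
        ring
      rw [hF]
      simp only
      rw [hcp]
      ring
    rw [MeasureTheory.integral_congr_ae (Filter.Eventually.of_forall hsp),
      MeasureTheory.integral_const_mul,
      Stmt12Aux.gammaLineIntegral (σ+ν+2*(ℓ:ℝ)) (by positivity) (α*X) hy]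
  -- assemble
  have hIeq : (∫ t : ℝ,
      Complex.Gamma ((σ:ℂ) + Complex.I*(t:ℂ) + (k:ℂ)/4 - 1/2)
        * hyp2F1 ((4*((σ:ℂ)+Complex.I*(t:ℂ))+(k:ℂ)-2)/8) ((4*((σ:ℂ)+Complex.I*(t:ℂ))+(k:ℂ)+2)/8)
            ((k:ℂ)/4 + 1/2) (-((β:ℂ))^2/((α:ℂ))^2)
        * ((α*X : ℝ) : ℂ) ^ (-(σ:ℂ) - Complex.I*(t:ℂ)))
      = ∑' ℓ : ℕ, (∫ t : ℝ, F ℓ t) := by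
    rw [hswap]
    exact MeasureTheory.integral_congr_ae (Filter.Eventually.of_forall hpt)
  rw [hIeq, tsum_congr hint]
  have hGarg : Real.Gamma ((k:ℝ)/4 + 1/2) = Real.Gamma (ν+1) := by
    rw [hνdef]; congr 1; ring
  rw [hGarg, ← tsum_mul_left]
  rw [besselJ, Complex.ofReal_mul, Complex.ofReal_tsum, ← tsum_mul_left]
  refine tsum_congr fun m => ?_
  have hTI := Stmt12Aux.termId α β X ν hα hβ hX hc0 m
  have hexp : -α*X = -(α*X) := by ring
  rw [hexp]
  rw [← hqdef] at hTI
  exact_mod_cast hTI.symm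
end
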